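/- arXiv:0903.3848 — 3 statements merged into one kernel-verified Lean document; each statement's English description precedes it below -/
import Mathlib

section
/- (Salomaa) The arity gap of any Boolean function with at least two essential variables is at most 2. -/
open Classical

/-- Boolean functions of arity `n` over GF(2). -/
abbrev BFn (n : ℕ) := (Fin n → ZMod 2) → ZMod 2

/-- Boolean functions of arbitrary arity. -/
abbrev BF := Σ n : ℕ, BFn n

/-- `g` is a simple minor of `f`. -/
def Minor {m n : ℕ} (g : BFn m) (f : BFn n) : Prop :=
  ∃ σ : Fin n → Fin m, ∀ a : Fin m → ZMod 2, g a = f (fun i => a (σ i))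

def MinorS (G F : BF) : Prop := Minor G.2 F.2

def EquivS (G F : BF) : Prop := MinorS G F ∧ MinorS F G

def StrictMinorS (G F : BF) : Prop := MinorS G F ∧ ¬ MinorS F G

/-- `x i` is an essential variable of `f`. -/
def Essential {n : ℕ} (f : BFn n) (i : Fin n) : Prop :=
  ∃ a b : Fin n → ZMod 2, (∀ j, j ≠ i → a j = b j) ∧ f a ≠ f b

noncomputable def essArity {n : ℕ} (f : BFn n) : ℕ :=
  (Finset.univ.filter fun i => Essential f i).card

noncomputable def essS (F : BF) : ℕ := essArity F.2

/-- `f_{i=j}` : identify variable `i` with variable `j`. -/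
def identify {n : ℕ} (f : BFn n) (i j : Fin n) : BFn n :=
  fun a => f (fun t => if t = i then a j else a t)

/-- `G` is a lower cover of `F` in the poset of equivalence classes. -/
def LowerCover (G F : BF) : Prop :=
  StrictMinorS G F ∧ ¬ ∃ H : BF, StrictMinorS G H ∧ StrictMinorS H F

/-- `F` is join-irreducible: some strict minor dominates all strict minors. -/
def JoinIrred (F : BF) : Prop :=
  ∃ F' : BF, StrictMinorS F' F ∧ ∀ G : BF, StrictMinorS G F → MinorS G F'

noncomputable def arityGap (F : BF) : ℕ :=
  sInf {d : ℕ | ∃ G : BF, StrictMinorS G F ∧ d = essS F - essS G}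

/-- Hypergraphs on vertex set `Fin n`. -/
abbrev HG (n : ℕ) := Finset (Finset (Fin n))

abbrev HGS := Σ n : ℕ, HG n

/-- `h` is a quotient map from `(Fin m, E')` to `(Fin n, E)`. -/
def IsQuotientMap {m n : ℕ} (E' : HG m) (E : HG n) (h : Fin m → Fin n) : Prop :=
  ∀ S : Finset (Fin n), S ∈ E ↔ Odd (E'.filter (fun T => T.image h = S)).card

/-- `H ⪯ H'` : there is a quotient map from `H'` to `H`. -/
def MinorH (H H' : HGS) : Prop :=
  ∃ h : Fin H'.1 → Fin H.1, IsQuotientMap H'.2 H.2 h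

/-- The hypergraph `H_{h'}` determined by a hypergraph and a map. -/
noncomputable def quotientHG {m n : ℕ} (E' : HG m) (h : Fin m → Fin n) : HG n :=
  Finset.univ.filter fun S => Odd (E'.filter (fun T => T.image h = S)).card

/-- The Boolean function of a hypergraph: evaluation of `Σ_{E} Π_{i ∈ E} x_i`. -/
def fHG {n : ℕ} (E : HG n) : BFn n :=
  fun a => ∑ S ∈ E, ∏ i ∈ S, a i

/-- A Steiner system (`2-(n,k,1)` design). -/
def IsSteiner {n : ℕ} (k : ℕ) (E : HG n) : Prop :=
  (∀ S ∈ E, S.card = k) ∧ ∀ i j : Fin n, i ≠ j → ∃! S, S ∈ E ∧ i ∈ S ∧ j ∈ S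

/-- Vertex set of the identification hypergraph `H_e`, `e = {i,j}`:
`(V \ e) ∪ {l_e}` where `none` plays the role of the new vertex `l_e`. -/
abbrev IdVert {n : ℕ} (i j : Fin n) := Option {x : Fin n // x ≠ i ∧ x ≠ j}

/-- The underlying subset of `V` of a set of vertices of `H_e` (ignoring `l_e`). -/
def baseSet {n : ℕ} {i j : Fin n} (E : Finset (IdVert i j)) : Finset (Fin n) :=
  E.biUnion fun o => o.elim ∅ fun x => {x.val}

/-- Exactly one or all three of `p`, `q`, `r` hold. -/
def OneOrAllThree (p q r : Prop) : Prop :=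
  (p ∧ ¬q ∧ ¬r) ∨ (¬p ∧ q ∧ ¬r) ∨ (¬p ∧ ¬q ∧ r) ∨ (p ∧ q ∧ r)

/-- The hyperedges of the identification hypergraph `H_e`, `e = {i,j}`. -/
noncomputable def idEdges {n : ℕ} (𝓔 : HG n) (i j : Fin n) :
    Finset (Finset (IdVert i j)) :=
  Finset.univ.filter fun E =>
    (none ∉ E ∧ baseSet E ∈ 𝓔) ∨
    (none ∈ E ∧ OneOrAllThree (insert i (insert j (baseSet E)) ∈ 𝓔)
      (insert i (baseSet E) ∈ 𝓔) (insert j (baseSet E) ∈ 𝓔))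

/-- The hyperedges of the induced hypergraph `H_{-e}` on `V \ e`, `e = {i,j}`. -/
noncomputable def minusEdges {n : ℕ} (𝓔 : HG n) (i j : Fin n) :
    Finset (Finset {x : Fin n // x ≠ i ∧ x ≠ j}) :=
  Finset.univ.filter fun E => E.image Subtype.val ∈ 𝓔

/-- `φ` is an isomorphism of hypergraphs. -/
def IsHGIso {α β : Type*} (𝓐 : Finset (Finset α)) (𝓑 : Finset (Finset β))
    (φ : α ≃ β) : Prop :=
  ∀ E : Finset α, E ∈ 𝓐 ↔ E.image φ ∈ 𝓑

/-- The (loopless) graph associated with a set of 2-element edges. -/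
def graphOf {n : ℕ} (𝓔 : HG n) : SimpleGraph (Fin n) where
  Adj v w := v ≠ w ∧ ({v, w} : Finset (Fin n)) ∈ 𝓔
  symm := by
    constructor
    intro v w h
    exact ⟨h.1.symm, by rw [Finset.pair_comm]; exact h.2⟩
  loopless := by
    constructor
    intro v h
    exact h.1 rfl
set_option linter.unusedVariables false

namespace S5

variable {n : ℕ}




lemma z2_add_one_add_one (a : ZMod 2) : a + 1 + 1 = a := by
  have h : ∀ a : ZMod 2, a + 1 + 1 = a := by decide
  exact h a

lemma z2_ne_iff {a b : ZMod 2} (h : a ≠ b) : b = a + 1 := by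
  have hh : ∀ a b : ZMod 2, a ≠ b → b = a + 1 := by decide
  exact hh a b h

lemma z2_add_one_ne (a : ZMod 2) : a + 1 ≠ a := by
  have h : ∀ a : ZMod 2, a + 1 ≠ a := by decide
  exact h a

/-- flip coordinate k -/
def flp (x : Fin n → ZMod 2) (k : Fin n) : Fin n → ZMod 2 :=
  Function.update x k (x k + 1)

@[simp] lemma flp_same (x : Fin n → ZMod 2) (k : Fin n) : flp x k k = x k + 1 := by
  simp [flp]

@[simp] lemma flp_ne {x : Fin n → ZMod 2} {k t : Fin n} (h : t ≠ k) : flp x k t = x t := by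
  simp [flp, Function.update_apply, h]

lemma flp_flp (x : Fin n → ZMod 2) (k : Fin n) : flp (flp x k) k = x := by
  funext t
  by_cases h : t = k
  · subst h; simp [z2_add_one_add_one]
  · simp [h]

lemma flp_comm (x : Fin n → ZMod 2) {k l : Fin n} (h : k ≠ l) :
    flp (flp x k) l = flp (flp x l) k := by
  funext t
  by_cases hk : t = k
  · subst hk; simp [h, flp_ne h]
  · by_cases hl : t = l
    · subst hl; simp [Ne.symm h, flp_ne (Ne.symm h)]
    · simp [hk, hl]

lemma essential_iff_flp (f : BFn n) (k : Fin n) :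
    Essential f k ↔ ∃ x, f (flp x k) ≠ f x := by
  constructor
  · rintro ⟨a, b, hab, hfab⟩
    by_cases h : b k = a k
    · exfalso; apply hfab; congr 1; funext t
      by_cases ht : t = k
      · subst ht; exact h.symm
      · exact hab t ht
    · refine ⟨a, ?_⟩
      have : b = flp a k := by
        funext t
        by_cases ht : t = k
        · subst ht; rw [flp_same]; exact z2_ne_iff (Ne.symm h)
        · rw [flp_ne ht]; exact (hab t ht).symm
      rw [← this]; exact fun hh => hfab hh.symm
  · rintro ⟨x, hx⟩
    exact ⟨flp x k, x, fun j hj => flp_ne hj, hx⟩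

/-- If f differs at two points, some coordinate where they differ is essential. -/
lemma exists_essential_of_ne (f : BFn n) :
    ∀ (x y : Fin n → ZMod 2), f x ≠ f y → ∃ t, x t ≠ y t ∧ Essential f t := by
  have H : ∀ (m : ℕ) (x y : Fin n → ZMod 2),
      (Finset.univ.filter (fun t => x t ≠ y t)).card = m →
      f x ≠ f y → ∃ t, x t ≠ y t ∧ Essential f t := by
    intro m
    induction m using Nat.strong_induction_on with
    | _ m ih =>
      intro x y hcard hne
      have hDne : (Finset.univ.filter (fun t => x t ≠ y t)).Nonempty := by
        rcases Finset.eq_empty_or_nonempty (Finset.univ.filter (fun t => x t ≠ y t)) with h | h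
        · exfalso; apply hne; congr 1; funext t
          by_contra ht
          have : t ∈ Finset.univ.filter (fun t => x t ≠ y t) := by
            simp [ht]
          rw [h] at this; exact absurd this (Finset.notMem_empty t)
        · exact h
      obtain ⟨t0, ht0⟩ := hDne
      have hxyt0 : x t0 ≠ y t0 := by simpa using ht0
      set x' := Function.update x t0 (y t0) with hx'
      by_cases hfx' : f x' = f y
      · -- f x ≠ f x', differ only at t0
        refine ⟨t0, hxyt0, ?_⟩
        refine ⟨x, x', fun j hj => ?_, by rw [hfx']; exact hne⟩
        rw [hx', Function.update_apply]; simp [hj]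
      · -- recurse
        have hsub : (Finset.univ.filter (fun t => x' t ≠ y t)) =
            (Finset.univ.filter (fun t => x t ≠ y t)).erase t0 := by
          ext t
          simp only [Finset.mem_filter, Finset.mem_erase, Finset.mem_univ, true_and]
          constructor
          · intro ht
            have htne : t ≠ t0 := by
              intro h; subst h
              apply ht; rw [hx']; simp
            rw [hx', Function.update_apply] at ht
            simp [htne] at ht
            exact ⟨htne, ht⟩
          · rintro ⟨htne, ht⟩
            rw [hx', Function.update_apply]; simp [htne]; exact ht
        have hlt : (Finset.univ.filter (fun t => x' t ≠ y t)).card < m := by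
          rw [hsub, ← hcard]
          exact Finset.card_erase_lt_of_mem ht0
        obtain ⟨t, htne, hte⟩ := ih _ hlt x' y rfl hfx'
        have : t ≠ t0 := by
          intro h; subst h; apply htne; rw [hx']; simp
        refine ⟨t, ?_, hte⟩
        rw [hx', Function.update_apply] at htne; simpa [this] using htne
  intro x y h
  exact H _ x y rfl h





/-- derivative of k vanishes on hyperplane x u = x v -/
def LostK (f : BFn n) (u v k : Fin n) : Prop :=
  ∀ x : Fin n → ZMod 2, x u = x v → f (flp x k) = f x

/-- f invariant under flipping u,v on hyperplane x u = x v -/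
def Par (f : BFn n) (u v : Fin n) : Prop :=
  ∀ x : Fin n → ZMod 2, x u = x v → f (flp (flp x u) v) = f x

noncomputable def EF (f : BFn n) : Finset (Fin n) :=
  Finset.univ.filter (fun i => Essential f i)

noncomputable def GS (f : BFn n) (u v : Fin n) : Finset (Fin n) :=
  (EF f).filter (fun k => k ≠ u ∧ k ≠ v ∧ LostK f u v k)

lemma mem_EF {f : BFn n} {k : Fin n} : k ∈ EF f ↔ Essential f k := by
  simp [EF]

lemma mem_GS {f : BFn n} {u v k : Fin n} :
    k ∈ GS f u v ↔ Essential f k ∧ k ≠ u ∧ k ≠ v ∧ LostK f u v k := by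
  simp [GS, EF]

lemma lostK_comm {f : BFn n} {u v k : Fin n} (h : LostK f u v k) : LostK f v u k :=
  fun x hx => h x hx.symm

lemma par_comm {f : BFn n} {u v : Fin n} (huv : u ≠ v) (h : Par f u v) : Par f v u := by
  intro x hx
  rw [flp_comm x (Ne.symm huv)]
  exact h x hx.symm

lemma GS_comm (f : BFn n) {u v : Fin n} : GS f u v = GS f v u := by
  ext k
  simp only [mem_GS]
  constructor
  · rintro ⟨he, hu, hv, hl⟩; exact ⟨he, hv, hu, lostK_comm hl⟩
  · rintro ⟨he, hv, hu, hl⟩; exact ⟨he, hu, hv, lostK_comm hl⟩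

/-- essential arity is monotone under minors -/
lemma card_EF_le_of_minor {m' : ℕ} (g : BFn m') (f : BFn n) (σ : Fin n → Fin m')
    (hm : ∀ a : Fin m' → ZMod 2, g a = f (fun i => a (σ i))) :
    (EF g).card ≤ (EF f).card := by
  -- for each essential i of g pick an essential coordinate t of f with σ t = i
  have key : ∀ i ∈ EF g, ∃ t, σ t = i ∧ Essential f t := by
    intro i hi
    rw [mem_EF, essential_iff_flp] at hi
    obtain ⟨a, ha⟩ := hi
    rw [hm, hm] at ha
    obtain ⟨t, htne, hte⟩ := exists_essential_of_ne f _ _ ha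
    refine ⟨t, ?_, hte⟩
    by_contra hσ
    apply htne
    show flp a i (σ t) = a (σ t)
    exact flp_ne hσ
  rcases Finset.eq_empty_or_nonempty (EF g) with he | hne
  · simp [he]
  · obtain ⟨i0, hi0⟩ := hne
    have hn : Nonempty (Fin n) := by
      obtain ⟨t, _, _⟩ := key i0 hi0; exact ⟨t⟩
    set w : Fin m' → Fin n := fun i =>
      if h : i ∈ EF g then Classical.choose (key i h) else hn.some with hwdef
    apply Finset.card_le_card_of_injOn w
    · intro i hi
      have hi' : i ∈ EF g := hi
      rw [Finset.mem_coe, mem_EF]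
      have := (Classical.choose_spec (key i hi')).2
      simpa [hwdef, dif_pos hi'] using this
    · intro i hi j hj hij
      have hi' : i ∈ EF g := hi
      have hj' : j ∈ EF g := hj
      have h1 := (Classical.choose_spec (key i hi')).1
      have h2 := (Classical.choose_spec (key j hj')).1
      simp only [hwdef, dif_pos hi', dif_pos hj'] at hij
      rw [← h1, ← h2, hij]





lemma identify_eval (f : BFn n) (u v : Fin n) (x : Fin n → ZMod 2) (hx : x u = x v) :
    identify f u v x = f x := by
  unfold identify
  congr 1
  funext t
  by_cases ht : t = u
  · subst ht; simp [hx.symm]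
  · simp [ht]

lemma D1 (f : BFn n) (u v k : Fin n) (hku : k ≠ u) (hkv : k ≠ v)
    (x : Fin n → ZMod 2) (hx : x u = x v) (hne : f (flp x k) ≠ f x) :
    Essential (identify f u v) k := by
  rw [essential_iff_flp]
  refine ⟨x, ?_⟩
  rw [identify_eval f u v x hx, identify_eval f u v (flp x k) (by rw [flp_ne (Ne.symm hku), flp_ne (Ne.symm hkv)]; exact hx)]
  exact hne

lemma D2 (f : BFn n) (u v : Fin n) (huv : u ≠ v)
    (x : Fin n → ZMod 2) (hx : x u = x v) (hne : f (flp (flp x u) v) ≠ f x) :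
    Essential (identify f u v) v := by
  rw [essential_iff_flp]
  refine ⟨x, ?_⟩
  rw [identify_eval f u v x hx]
  have : identify f u v (flp x v) = f (flp (flp x u) v) := by
    unfold identify
    congr 1
    funext t
    by_cases ht : t = u
    · subst ht
      rw [if_pos rfl, flp_same, flp_ne huv, flp_same, hx]
    · rw [if_neg ht]
      by_cases htv : t = v
      · subst htv
        rw [flp_same, flp_same, flp_ne (Ne.symm huv)]
      · rw [flp_ne htv, flp_ne htv, flp_ne ht]
  rw [this]
  exact hne

lemma D3a (f : BFn n) (u v : Fin n) (huv : u ≠ v) :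
    ¬ Essential (identify f u v) u := by
  intro h
  obtain ⟨a, b, hab, hfab⟩ := h
  apply hfab
  unfold identify
  congr 1
  funext t
  by_cases ht : t = u
  · subst ht; rw [if_pos rfl, if_pos rfl]; exact hab v (Ne.symm huv)
  · rw [if_neg ht, if_neg ht]; exact hab t ht

lemma D3b (f : BFn n) (u v k : Fin n) (hku : k ≠ u) (hkv : k ≠ v)
    (h : Essential (identify f u v) k) : Essential f k := by
  rw [essential_iff_flp] at h ⊢
  obtain ⟨a, ha⟩ := h
  refine ⟨fun t => if t = u then a v else a t, ?_⟩
  have key : (fun t => if t = u then (flp a k) v else (flp a k) t)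
      = flp (fun t => if t = u then a v else a t) k := by
    funext t
    by_cases ht : t = u
    · subst ht
      rw [if_pos rfl, flp_ne (Ne.symm hkv), flp_ne (Ne.symm hku), if_pos rfl]
    · rw [if_neg ht]
      by_cases htk : t = k
      · subst htk
        rw [flp_same, flp_same, if_neg ht]
      · rw [flp_ne htk, flp_ne htk, if_neg ht]
  unfold identify at ha
  rw [key] at ha
  exact ha

lemma EF_identify_subset (f : BFn n) (u v : Fin n) (huv : u ≠ v) (hv : v ∈ EF f) :
    EF (identify f u v) ⊆ (EF f).erase u := by
  intro k hk
  rw [mem_EF] at hk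
  rw [Finset.mem_erase]
  have hku : k ≠ u := by
    intro h; subst h; exact D3a f k v huv hk
  refine ⟨hku, ?_⟩
  by_cases hkv : k = v
  · subst hkv; exact hv
  · rw [mem_EF]; exact D3b f u v k hku hkv hk

lemma card_EF_identify (f : BFn n) (u v : Fin n) (huv : u ≠ v)
    (hu : u ∈ EF f) (hv : v ∈ EF f)
    (hbad : (GS f u v).card + (if Par f u v then 1 else 0) ≤ 1) :
    (EF f).card ≤ (EF (identify f u v)).card + 2 := by
  set S : Finset (Fin n) := ((EF f).erase u).erase v with hS
  have hvS : v ∉ S := by simp [hS]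
  have hcardS : (EF f).card = S.card + 2 := by
    rw [hS]
    rw [Finset.card_erase_of_mem (by rw [Finset.mem_erase]; exact ⟨Ne.symm huv, hv⟩)]
    rw [Finset.card_erase_of_mem hu]
    have h2 : 2 ≤ (EF f).card := by
      have := Finset.one_lt_card.mpr ⟨u, hu, v, hv, huv⟩
      omega
    omega
  have hSsub : S ⊆ (EF (identify f u v)) ∪ GS f u v := by
    intro k hk
    have hkE : k ∈ EF f := by
      rw [hS] at hk
      exact Finset.mem_of_mem_erase (Finset.mem_of_mem_erase hk)
    have hkv : k ≠ v := by rw [hS] at hk; exact (Finset.mem_erase.mp hk).1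
    have hku : k ≠ u := by
      rw [hS] at hk
      exact (Finset.mem_erase.mp (Finset.mem_of_mem_erase hk)).1
    rw [Finset.mem_union]
    by_cases hl : LostK f u v k
    · right; rw [mem_GS]; exact ⟨mem_EF.mp hkE, hku, hkv, hl⟩
    · left
      unfold LostK at hl
      push_neg at hl
      obtain ⟨x, hx1, hx2⟩ := hl
      rw [mem_EF]
      exact D1 f u v k hku hkv x hx1 hx2
  by_cases hp : Par f u v
  · -- GS empty
    have hg0 : (GS f u v).card = 0 := by
      rw [if_pos hp] at hbad; omega
    have : S ⊆ EF (identify f u v) := by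
      intro k hk
      have := hSsub hk
      rw [Finset.mem_union] at this
      rcases this with h | h
      · exact h
      · exfalso; rw [Finset.card_eq_zero] at hg0; rw [hg0] at h; simp at h
    have := Finset.card_le_card this
    omega
  · -- v survives
    have hg1 : (GS f u v).card ≤ 1 := by
      rw [if_neg hp] at hbad; omega
    unfold Par at hp
    push_neg at hp
    obtain ⟨x, hx1, hx2⟩ := hp
    have hvE : v ∈ EF (identify f u v) := by
      rw [mem_EF]; exact D2 f u v huv x hx1 hx2
    have hsub2 : insert v (S \ GS f u v) ⊆ EF (identify f u v) := by
      intro k hk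
      rw [Finset.mem_insert] at hk
      rcases hk with rfl | hk
      · exact hvE
      · rw [Finset.mem_sdiff] at hk
        have := hSsub hk.1
        rw [Finset.mem_union] at this
        tauto
    have hc2 : S.card ≤ (S \ GS f u v).card + 1 := by
      have : S ⊆ (S \ GS f u v) ∪ GS f u v := by
        intro k hk
        rw [Finset.mem_union, Finset.mem_sdiff]
        by_cases h : k ∈ GS f u v
        · right; exact h
        · left; exact ⟨hk, h⟩
      have h1 := Finset.card_le_card this
      have h2 := Finset.card_union_le (S \ GS f u v) (GS f u v)
      omega
    have hc3 : (insert v (S \ GS f u v)).card = (S \ GS f u v).card + 1 := by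
      rw [Finset.card_insert_of_notMem]
      intro h
      rw [Finset.mem_sdiff] at h
      exact hvS h.1
    have := Finset.card_le_card hsub2
    omega




/-- normalization: to prove the Par-identity at x, may first flip a lost coordinate k -/
lemma par_point_shift {f : BFn n} {u v k : Fin n} (hk : LostK f u v k)
    (huv : u ≠ v) (hku : k ≠ u) (hkv : k ≠ v) {x : Fin n → ZMod 2} (hx : x u = x v)
    (h : f (flp (flp (flp x k) u) v) = f (flp x k)) :
    f (flp (flp x u) v) = f x := by
  have h1 : f (flp x k) = f x := hk x hx
  have h2 : f (flp (flp (flp x u) v) k) = f (flp (flp x u) v) := by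
    apply hk
    rw [flp_ne huv, flp_same, flp_same, flp_ne (Ne.symm huv), hx]
  have e : flp (flp (flp x u) v) k = flp (flp (flp x k) u) v := by
    rw [flp_comm (flp x u) (Ne.symm hkv), flp_comm x (Ne.symm hku)]
  rw [e] at h2
  rw [← h2, h, h1]

/-- C1 -/
lemma C1 {f : BFn n} {u v k l : Fin n} (huv : u ≠ v) (hkl : k ≠ l)
    (hku : k ≠ u) (hkv : k ≠ v) (hlu : l ≠ u) (hlv : l ≠ v)
    (hkuv : LostK f u v k) (hu : LostK f k l u) (hv : LostK f k l v) :
    Par f u v := by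
  have key : ∀ y : Fin n → ZMod 2, y k = y l → f (flp (flp y u) v) = f y := by
    intro y hyc
    have e1 : f (flp y u) = f y := hu y hyc
    have e2 : f (flp (flp y u) v) = f (flp y u) := by
      apply hv
      rw [flp_ne hku, flp_ne hlu]
      exact hyc
    rw [e2, e1]
  intro x hx
  by_cases hc : x k = x l
  · exact key x hc
  · apply par_point_shift hkuv huv hku hkv hx
    apply key
    rw [flp_same, flp_ne (Ne.symm hkl)]
    exact (z2_ne_iff hc).symm

/-- E1 : transfer of lostness -/
lemma E1 {f : BFn n} {u v k a w : Fin n} (hkuv : LostK f u v k) (hw : LostK f a k w)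
    (hwu : w ≠ u) (hwv : w ≠ v) (hwk : w ≠ k) (hak : a ≠ k) :
    LostK f u v w := by
  intro x hx
  by_cases hc : x a = x k
  · exact hw x hc
  · have h1 : f (flp x k) = f x := hkuv x hx
    have h2 : f (flp (flp x w) k) = f (flp x w) := by
      apply hkuv
      rw [flp_ne (Ne.symm hwu), flp_ne (Ne.symm hwv)]
      exact hx
    have h3 : f (flp (flp x k) w) = f (flp x k) := by
      apply hw
      rw [flp_ne hak, flp_same]
      exact z2_ne_iff (fun h => hc h.symm)
    rw [flp_comm x hwk] at h2
    rw [← h2, h3, h1]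

/-- vanish -/
lemma vanish {f : BFn n} {b k l w : Fin n} (hbk : b ≠ k) (hbl : b ≠ l) (hkl : k ≠ l)
    (hwb : w ≠ b) (hwk : w ≠ k) (hwl : w ≠ l)
    (h1 : LostK f b k w) (h2 : LostK f b l w) (hP : Par f k l) :
    ∀ a, f (flp a w) = f a := by
  intro a
  by_cases c1 : a b = a k
  · exact h1 a c1
  · by_cases c2 : a b = a l
    · exact h2 a c2
    · have hkl2 : a k = a l := by rw [z2_ne_iff c1, z2_ne_iff c2]
      have e1 : f (flp (flp a k) l) = f a := hP a hkl2
      have e2 : f (flp (flp (flp a w) k) l) = f (flp a w) := by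
        apply hP
        rw [flp_ne (Ne.symm hwk), flp_ne (Ne.symm hwl)]
        exact hkl2
      have e3 : f (flp (flp (flp a k) l) w) = f (flp (flp a k) l) := by
        apply h1
        rw [flp_ne hbl, flp_ne hbk, flp_ne hkl, flp_same, z2_ne_iff c1,
          z2_add_one_add_one]
      have e4 : flp (flp (flp a k) l) w = flp (flp (flp a w) k) l := by
        rw [flp_comm (flp a k) (Ne.symm hwl), flp_comm a (Ne.symm hwk)]
      rw [e4] at e3
      rw [← e2, e3, e1]
  



/-- K1, distinct case -/
lemma K1_ne {f : BFn n} {u v k k' : Fin n} (huv : u ≠ v) (hkk' : k ≠ k')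
    (hku : k ≠ u) (hkv : k ≠ v) (hk'u : k' ≠ u) (hk'v : k' ≠ v)
    (hk : LostK f u v k) (hk' : LostK f u v k')
    (hPu : Par f u k) (hPv : Par f v k') : Par f u v := by
  have main : ∀ x : Fin n → ZMod 2, x u = x v → x k = x u → x k' = x v →
      f (flp (flp x u) v) = f x := by
    intro x hx h1 h2
    have e1 : f (flp (flp x u) k) = f x := hPu x h1.symm
    have e2 : f (flp (flp (flp (flp x u) k) v) k') = f (flp (flp x u) k) := by
      apply hPv
      simp only [flp_same, flp_ne huv, flp_ne huv.symm, flp_ne hku, flp_ne hku.symm,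
        flp_ne hkv, flp_ne hkv.symm, flp_ne hk'u, flp_ne hk'u.symm, flp_ne hk'v,
        flp_ne hk'v.symm, flp_ne hkk', flp_ne hkk'.symm]
      exact h2.symm
    set z := flp (flp (flp (flp x u) k) v) k' with hz
    have hzu : z u = x u + 1 := by
      rw [hz]
      simp only [flp_same, flp_ne huv, flp_ne huv.symm, flp_ne hku, flp_ne hku.symm,
        flp_ne hkv, flp_ne hkv.symm, flp_ne hk'u, flp_ne hk'u.symm, flp_ne hk'v,
        flp_ne hk'v.symm, flp_ne hkk', flp_ne hkk'.symm]
    have hzv : z v = x v + 1 := by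
      rw [hz]
      simp only [flp_same, flp_ne huv, flp_ne huv.symm, flp_ne hku, flp_ne hku.symm,
        flp_ne hkv, flp_ne hkv.symm, flp_ne hk'u, flp_ne hk'u.symm, flp_ne hk'v,
        flp_ne hk'v.symm, flp_ne hkk', flp_ne hkk'.symm]
    have e3 : f (flp z k) = f z := by
      apply hk
      rw [hzu, hzv, hx]
    have e4 : f (flp (flp z k) k') = f (flp z k) := by
      apply hk'
      rw [flp_ne hku.symm, flp_ne hkv.symm, hzu, hzv, hx]
    have e5 : flp (flp z k) k' = flp (flp x u) v := by
      rw [hz, flp_comm (flp (flp (flp x u) k) v) hkk'.symm, flp_flp,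
        flp_comm (flp (flp x u) k) hkv.symm, flp_flp]
    calc f (flp (flp x u) v) = f (flp (flp z k) k') := by rw [e5]
      _ = f (flp z k) := e4
      _ = f z := e3
      _ = f (flp (flp x u) k) := e2
      _ = f x := e1
  intro x hx
  by_cases c1 : x k = x u
  · by_cases c2 : x k' = x v
    · exact main x hx c1 c2
    · apply par_point_shift hk' huv hk'u hk'v hx
      have hy : (flp x k') u = (flp x k') v := by
        rw [flp_ne hk'u.symm, flp_ne hk'v.symm]; exact hx
      apply main (flp x k') hy
      · rw [flp_ne hkk', flp_ne hk'u.symm]; exact c1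
      · rw [flp_same, flp_ne hk'v.symm]; exact (z2_ne_iff c2).symm
  · apply par_point_shift hk huv hku hkv hx
    have hy : (flp x k) u = (flp x k) v := by
      rw [flp_ne hku.symm, flp_ne hkv.symm]; exact hx
    have hyk : (flp x k) k = (flp x k) u := by
      rw [flp_same, flp_ne hku.symm]; exact (z2_ne_iff c1).symm
    by_cases c2 : (flp x k) k' = (flp x k) v
    · exact main (flp x k) hy hyk c2
    · apply par_point_shift hk' huv hk'u hk'v hy
      have hy2 : (flp (flp x k) k') u = (flp (flp x k) k') v := by
        rw [flp_ne hk'u.symm, flp_ne hk'v.symm]; exact hy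
      apply main (flp (flp x k) k') hy2
      · rw [flp_ne hkk', flp_ne hk'u.symm]; exact hyk
      · rw [flp_same, flp_ne hk'v.symm]; exact (z2_ne_iff c2).symm

/-- K1, equal case (needs an auxiliary l with Par f k l) -/
lemma K1_eq {f : BFn n} {u v k l : Fin n} (huv : u ≠ v) (hkl : k ≠ l)
    (hku : k ≠ u) (hkv : k ≠ v) (hlu : l ≠ u) (hlv : l ≠ v)
    (hk : LostK f u v k) (hl : LostK f u v l)
    (hPu : Par f u k) (hPv : Par f v k) (hPkl : Par f k l) : Par f u v := by
  have main : ∀ x : Fin n → ZMod 2, x u = x v → x k = x u → x l ≠ x u →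
      f (flp (flp x u) v) = f x := by
    intro x hx h1 h2
    have e1 : f (flp (flp x u) k) = f x := hPu x h1.symm
    have e2 : f (flp (flp (flp (flp x u) k) k) l) = f (flp (flp x u) k) := by
      apply hPkl
      simp only [flp_same, flp_ne huv, flp_ne huv.symm, flp_ne hku, flp_ne hku.symm,
        flp_ne hkv, flp_ne hkv.symm, flp_ne hlu, flp_ne hlu.symm, flp_ne hlv,
        flp_ne hlv.symm, flp_ne hkl, flp_ne hkl.symm]
      rw [h1]
      exact (z2_ne_iff (fun h => h2 h.symm)).symm
    rw [flp_flp] at e2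
    have e3 : f (flp (flp (flp (flp x u) l) v) k) = f (flp (flp x u) l) := by
      apply hPv
      simp only [flp_same, flp_ne huv, flp_ne huv.symm, flp_ne hku, flp_ne hku.symm,
        flp_ne hkv, flp_ne hkv.symm, flp_ne hlu, flp_ne hlu.symm, flp_ne hlv,
        flp_ne hlv.symm, flp_ne hkl, flp_ne hkl.symm]
      rw [← hx]; exact h1.symm
    have e4 : f (flp (flp (flp (flp (flp x u) l) v) k) k)
        = f (flp (flp (flp (flp x u) l) v) k) := by
      apply hk
      simp only [flp_same, flp_ne huv, flp_ne huv.symm, flp_ne hku, flp_ne hku.symm,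
        flp_ne hkv, flp_ne hkv.symm, flp_ne hlu, flp_ne hlu.symm, flp_ne hlv,
        flp_ne hlv.symm, flp_ne hkl, flp_ne hkl.symm]
      rw [hx]
    rw [flp_flp] at e4
    have e5 : f (flp (flp (flp (flp x u) l) v) l) = f (flp (flp (flp x u) l) v) := by
      apply hl
      simp only [flp_same, flp_ne huv, flp_ne huv.symm, flp_ne hku, flp_ne hku.symm,
        flp_ne hkv, flp_ne hkv.symm, flp_ne hlu, flp_ne hlu.symm, flp_ne hlv,
        flp_ne hlv.symm, flp_ne hkl, flp_ne hkl.symm]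
      rw [hx]
    have e6 : flp (flp (flp (flp x u) l) v) l = flp (flp x u) v := by
      rw [flp_comm (flp (flp x u) l) hlv.symm, flp_flp]
    calc f (flp (flp x u) v) = f (flp (flp (flp (flp x u) l) v) l) := by rw [e6]
      _ = f (flp (flp (flp x u) l) v) := e5
      _ = f (flp (flp (flp (flp x u) l) v) k) := e4
      _ = f (flp (flp x u) l) := e3
      _ = f (flp (flp x u) k) := e2
      _ = f x := e1
  intro x hx
  by_cases c1 : x k = x u
  · by_cases c2 : x l = x u
    · apply par_point_shift hl huv hlu hlv hx
      have hy : (flp x l) u = (flp x l) v := by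
        rw [flp_ne hlu.symm, flp_ne hlv.symm]; exact hx
      apply main (flp x l) hy
      · rw [flp_ne hkl, flp_ne hlu.symm]; exact c1
      · rw [flp_same, flp_ne hlu.symm, c2]
        exact z2_add_one_ne (x u)
    · exact main x hx c1 c2
  · apply par_point_shift hk huv hku hkv hx
    have hy : (flp x k) u = (flp x k) v := by
      rw [flp_ne hku.symm, flp_ne hkv.symm]; exact hx
    have hyk : (flp x k) k = (flp x k) u := by
      rw [flp_same, flp_ne hku.symm]; exact (z2_ne_iff c1).symm
    by_cases c2 : (flp x k) l = (flp x k) u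
    · apply par_point_shift hl huv hlu hlv hy
      have hy2 : (flp (flp x k) l) u = (flp (flp x k) l) v := by
        rw [flp_ne hlu.symm, flp_ne hlv.symm]; exact hy
      apply main (flp (flp x k) l) hy2
      · rw [flp_ne hkl, flp_ne hlu.symm]; exact hyk
      · rw [flp_ne hkl.symm, flp_ne hku.symm] at c2
        rw [flp_same, flp_ne hkl.symm, flp_ne hlu.symm, flp_ne hku.symm, c2]
        exact z2_add_one_ne _
    · exact main (flp x k) hy hyk c2

/-- parity pair invariance extends off the diagonal, given a third parity partner -/
lemma inv_of_par {f : BFn n} {p q w : Fin n} (hpq : p ≠ q) (hwp : w ≠ p) (hwq : w ≠ q)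
    (hP : Par f p q) (hPw : Par f p w) (hQw : Par f q w) :
    ∀ x, f (flp (flp x p) q) = f x := by
  intro x
  by_cases hc : x p = x q
  · exact hP x hc
  · by_cases hw : x w = x p
    · have e1 : f (flp (flp x p) w) = f x := hPw x hw.symm
      have e2 : f (flp (flp (flp (flp x p) w) q) w) = f (flp (flp x p) w) := by
        apply hQw
        simp only [flp_same, flp_ne hpq, flp_ne hpq.symm, flp_ne hwp, flp_ne hwp.symm,
          flp_ne hwq, flp_ne hwq.symm]
        rw [hw]
        exact z2_ne_iff hc
      have e3 : flp (flp (flp (flp x p) w) q) w = flp (flp x p) q := by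
        rw [flp_comm (flp (flp x p) w) (fun h => hwq h.symm), flp_flp]
      rw [e3] at e2
      rw [e2, e1]
    · have hw2 : x w = x q := by
        rw [z2_ne_iff (fun h => hw h.symm), z2_ne_iff hc]
      have e1 : f (flp (flp x q) w) = f x := hQw x hw2.symm
      have e2 : f (flp (flp (flp (flp x q) w) p) w) = f (flp (flp x q) w) := by
        apply hPw
        simp only [flp_same, flp_ne hpq, flp_ne hpq.symm, flp_ne hwp, flp_ne hwp.symm,
          flp_ne hwq, flp_ne hwq.symm]
        rw [hw2]
        exact z2_ne_iff (fun h => hc h.symm)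
      have e3 : flp (flp (flp (flp x q) w) p) w = flp (flp x p) q := by
        rw [flp_comm (flp (flp x q) w) (fun h => hwp h.symm), flp_flp,
          flp_comm x hpq.symm]
      rw [e3] at e2
      rw [e2, e1]




theorem core (f : BFn n) (h2 : 2 ≤ (EF f).card) :
    ∃ u v : Fin n, u ∈ EF f ∧ v ∈ EF f ∧ u ≠ v ∧
      (GS f u v).card + (if Par f u v then 1 else 0) ≤ 1 := by
  by_contra hcon
  push_neg at hcon
  have hstar : ∀ u v : Fin n, u ∈ EF f → v ∈ EF f → u ≠ v →
      2 ≤ (GS f u v).card + (if Par f u v then 1 else 0) := by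
    intro u v hu hv huv
    have := hcon u v hu hv huv
    omega
  have essMem : ∀ {k : Fin n}, k ∈ EF f → ∃ a, f (flp a k) ≠ f a := by
    intro k hk; exact (essential_iff_flp f k).mp (mem_EF.mp hk)
  have essNot : ∀ {k : Fin n}, k ∈ EF f → (∀ a, f (flp a k) = f a) → False := by
    intro k hk hall
    obtain ⟨a, ha⟩ := essMem hk
    exact ha (hall a)
  by_cases hallpar : ∀ u v : Fin n, u ∈ EF f → v ∈ EF f → u ≠ v → Par f u v
  · -- all-parity case
    obtain ⟨u, hu, v, hv, huv⟩ := Finset.one_lt_card.mp (by omega : 1 < (EF f).card)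
    have h1 := hstar u v hu hv huv
    rw [if_pos (hallpar u v hu hv huv)] at h1
    obtain ⟨k, hk⟩ := Finset.card_pos.mp (by omega : 0 < (GS f u v).card)
    rw [mem_GS] at hk
    obtain ⟨hkE, hku, hkv, hkL⟩ := hk
    have hkEF : k ∈ EF f := mem_EF.mpr hkE
    have hInv : ∀ x, f (flp (flp x u) k) = f x :=
      inv_of_par (Ne.symm hku) (Ne.symm huv) (Ne.symm hkv)
        (hallpar u k hu hkEF (Ne.symm hku))
        (hallpar u v hu hv huv)
        (hallpar k v hkEF hv hkv)
    obtain ⟨a, ha⟩ := essMem hkEF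
    apply ha
    by_cases hc : a u = a v
    · exact hkL a hc
    · have hmem : (flp a u) u = (flp a u) v := by
        rw [flp_same, flp_ne huv.symm]
        exact (z2_ne_iff hc).symm
      have h1' : f (flp (flp a u) k) = f (flp a u) := hkL (flp a u) hmem
      have h4' : flp (flp (flp a k) u) k = flp a u := by
        rw [flp_comm a hku, flp_flp]
      calc f (flp a k) = f (flp (flp (flp a k) u) k) := (hInv (flp a k)).symm
        _ = f (flp a u) := by rw [h4']
        _ = f (flp (flp a u) k) := h1'.symm
        _ = f a := hInv a
  · -- exists non-parity pair: take one minimizing the size of GS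
    push_neg at hallpar
    obtain ⟨u0, v0, hu0, hv0, huv0, hnp0⟩ := hallpar
    set NP := ((EF f) ×ˢ (EF f)).filter
      (fun p => p.1 ≠ p.2 ∧ ¬ Par f p.1 p.2) with hNP
    have hNPne : NP.Nonempty := by
      refine ⟨(u0, v0), ?_⟩
      rw [hNP, Finset.mem_filter, Finset.mem_product]
      exact ⟨⟨hu0, hv0⟩, huv0, hnp0⟩
    obtain ⟨p, hmemNP, hminNP⟩ :=
      Finset.exists_min_image NP (fun p => (GS f p.1 p.2).card) hNPne
    obtain ⟨u, v⟩ := p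
    rw [hNP, Finset.mem_filter, Finset.mem_product] at hmemNP
    obtain ⟨⟨hu, hv⟩, huv, hnp⟩ := hmemNP
    set T := GS f u v with hT
    have hTsub : ∀ {k}, k ∈ T → k ∈ EF f ∧ k ≠ u ∧ k ≠ v ∧ LostK f u v k := by
      intro k hk
      rw [hT, mem_GS] at hk
      exact ⟨mem_EF.mpr hk.1, hk.2.1, hk.2.2.1, hk.2.2.2⟩
    have ht2 : 2 ≤ T.card := by
      have hh := hstar u v hu hv huv
      rw [if_neg hnp, ← hT] at hh
      omega
    -- every pair inside T is a parity pair
    have hTpar : ∀ k ∈ T, ∀ l ∈ T, k ≠ l → Par f k l := by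
      intro k hk l hl hkl
      obtain ⟨hkE, hku, hkv, hkL⟩ := hTsub hk
      obtain ⟨hlE, hlu, hlv, hlL⟩ := hTsub hl
      by_contra hnp'
      have hmin' : T.card ≤ (GS f k l).card := by
        have := hminNP (k, l) (by
          rw [hNP, Finset.mem_filter, Finset.mem_product]
          exact ⟨⟨hkE, hlE⟩, hkl, hnp'⟩)
        simpa [hT] using this
      have hnb : ¬(LostK f k l u ∧ LostK f k l v) := by
        rintro ⟨h1', h2'⟩
        exact hnp (C1 huv hkl hku hkv hlu hlv hkL h1' h2')
      have hmem : ∀ w ∈ GS f k l, w ≠ u → w ≠ v → w ∈ (T.erase k).erase l := by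
        intro w hw hwu hwv
        rw [mem_GS] at hw
        obtain ⟨hwE, hwk, hwl, hwL⟩ := hw
        have hLw : LostK f u v w := E1 hkL (lostK_comm hwL) hwu hwv hwk (Ne.symm hkl)
        rw [Finset.mem_erase, Finset.mem_erase, hT, mem_GS]
        exact ⟨hwl, hwk, hwE, hwu, hwv, hLw⟩
      have hsub : (GS f k l).card ≤ ((T.erase k).erase l).card + 1 := by
        by_cases hcu : LostK f k l u
        · have hss : GS f k l ⊆ insert u ((T.erase k).erase l) := by
            intro w hw
            rw [Finset.mem_insert]
            by_cases hwu : w = u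
            · left; exact hwu
            · right
              have hwv : w ≠ v := by
                intro h; subst h
                exact hnb ⟨hcu, (mem_GS.mp hw).2.2.2⟩
              exact hmem w hw hwu hwv
          calc (GS f k l).card ≤ (insert u ((T.erase k).erase l)).card :=
                Finset.card_le_card hss
            _ ≤ ((T.erase k).erase l).card + 1 := Finset.card_insert_le _ _
        · have hss : GS f k l ⊆ insert v ((T.erase k).erase l) := by
            intro w hw
            rw [Finset.mem_insert]
            by_cases hwv : w = v
            · left; exact hwv
            · right
              have hwu : w ≠ u := by
                intro h; subst h
                exact hcu (mem_GS.mp hw).2.2.2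
              exact hmem w hw hwu hwv
          calc (GS f k l).card ≤ (insert v ((T.erase k).erase l)).card :=
                Finset.card_le_card hss
            _ ≤ ((T.erase k).erase l).card + 1 := Finset.card_insert_le _ _
      have c1 : (T.erase k).card = T.card - 1 := Finset.card_erase_of_mem hk
      have c2 : ((T.erase k).erase l).card = (T.erase k).card - 1 :=
        Finset.card_erase_of_mem (Finset.mem_erase.mpr ⟨Ne.symm hkl, hl⟩)
      omega
    -- dichotomy
    have dicho : ∀ a b : Fin n, a ∈ EF f → b ∈ EF f → a ≠ b → GS f a b = T →
        (∃ k ∈ T, Par f b k) ∨ (∀ k ∈ T, LostK f b k a) := by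
      intro a b ha hb hab hgs
      by_cases hex : ∃ k ∈ T, Par f b k
      · left; exact hex
      right
      push_neg at hex
      by_contra hall
      push_neg at hall
      obtain ⟨k0, hk0T, hk0n⟩ := hall
      set M : Fin n → Finset (Fin n) := fun k => (GS f b k) ∩ T with hM
      have hTsub' : ∀ {k}, k ∈ T → Essential f k ∧ k ≠ a ∧ k ≠ b ∧ LostK f a b k := by
        intro k hk
        rw [← hgs, mem_GS] at hk
        exact hk
      have hMsub : ∀ k ∈ T, ∀ w ∈ GS f b k, w ≠ a → w ∈ M k := by
        intro k hk w hw hwa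
        rw [hM, Finset.mem_inter]
        refine ⟨hw, ?_⟩
        rw [mem_GS] at hw
        obtain ⟨hwE, hwb, hwk, hwL⟩ := hw
        obtain ⟨hkE, hka, hkb, hkL⟩ := hTsub' hk
        have hLw : LostK f a b w := E1 hkL hwL hwa hwb hwk (Ne.symm hkb)
        rw [hT] at hgs ⊢
        rw [← hgs, mem_GS]
        exact ⟨hwE, hwa, hwb, hLw⟩
      have hM1 : ∀ k ∈ T, 1 ≤ (M k).card := by
        intro k hk
        obtain ⟨hkE, hka, hkb, hkL⟩ := hTsub' hk
        have hs := hstar b k hb (mem_EF.mpr hkE) (Ne.symm hkb)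
        rw [if_neg (hex k hk)] at hs
        have hss : GS f b k ⊆ insert a (M k) := by
          intro w hw
          rw [Finset.mem_insert]
          by_cases hwa : w = a
          · left; exact hwa
          · right; exact hMsub k hk w hw hwa
        have h1' := Finset.card_le_card hss
        have h2' := Finset.card_insert_le a (M k)
        omega
      have hM2 : 2 ≤ (M k0).card := by
        obtain ⟨hk0E, hk0a, hk0b, hk0L⟩ := hTsub' hk0T
        have hs := hstar b k0 hb (mem_EF.mpr hk0E) (Ne.symm hk0b)
        rw [if_neg (hex k0 hk0T)] at hs
        have hss : GS f b k0 ⊆ M k0 := by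
          intro w hw
          have hwa : w ≠ a := by
            intro h; subst h
            exact hk0n (mem_GS.mp hw).2.2.2
          exact hMsub k0 hk0T w hw hwa
        have := Finset.card_le_card hss
        omega
      have hdisj : ∀ k ∈ T, ∀ k' ∈ T, k ≠ k' → Disjoint (M k) (M k') := by
        intro k hk k' hk' hkk'
        rw [Finset.disjoint_left]
        intro w hwk hwk'
        rw [hM, Finset.mem_inter] at hwk hwk'
        obtain ⟨hw1, hwT⟩ := hwk
        obtain ⟨hw2, _⟩ := hwk'
        rw [mem_GS] at hw1 hw2
        have hkb : k ≠ b := (hTsub' hk).2.2.1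
        have hk'b : k' ≠ b := (hTsub' hk').2.2.1
        have hvan : ∀ x, f (flp x w) = f x :=
          vanish (Ne.symm hkb) (Ne.symm hk'b) hkk' hw1.2.1 hw1.2.2.1 hw2.2.2.1
            hw1.2.2.2 hw2.2.2.2 (hTpar k hk k' hk' hkk')
        exact essNot (hTsub hwT).1 hvan
      have hsum : ∑ k ∈ T, (M k).card = (T.biUnion M).card :=
        (Finset.card_biUnion hdisj).symm
      have hUB : (T.biUnion M).card ≤ T.card := by
        apply Finset.card_le_card
        intro w hw
        rw [Finset.mem_biUnion] at hw
        obtain ⟨k, hk, hwk⟩ := hw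
        rw [hM, Finset.mem_inter] at hwk
        exact hwk.2
      have hLB : T.card + 1 ≤ ∑ k ∈ T, (M k).card := by
        have e1 : ∑ k ∈ T.erase k0, (M k).card + (M k0).card = ∑ k ∈ T, (M k).card :=
          Finset.sum_erase_add T _ hk0T
        have e2 : (T.erase k0).card ≤ ∑ k ∈ T.erase k0, (M k).card := by
          calc (T.erase k0).card = ∑ _k ∈ T.erase k0, 1 := by
                rw [Finset.sum_const, smul_eq_mul, mul_one]
            _ ≤ ∑ k ∈ T.erase k0, (M k).card :=
                Finset.sum_le_sum (fun k hk => hM1 k (Finset.mem_of_mem_erase hk))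
        have e3 : (T.erase k0).card = T.card - 1 := Finset.card_erase_of_mem hk0T
        omega
      omega
    -- final branching
    obtain ⟨k1, hk1, l1, hl1, hk1l1⟩ := Finset.one_lt_card.mp (by omega : 1 < T.card)
    obtain ⟨hk1E, hk1u, hk1v, hk1L⟩ := hTsub hk1
    obtain ⟨hl1E, hl1u, hl1v, hl1L⟩ := hTsub hl1
    have du := dicho v u hv hu (Ne.symm huv) (by rw [hT]; exact (GS_comm f).symm)
    have dv := dicho u v hu hv huv hT.symm
    rcases du with ⟨k, hkT, hPuk⟩ | hallu
    · rcases dv with ⟨k', hk'T, hPvk'⟩ | hallv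
      · obtain ⟨hkE, hku, hkv, hkL⟩ := hTsub hkT
        obtain ⟨hk'E, hk'u, hk'v, hk'L⟩ := hTsub hk'T
        by_cases hkk' : k = k'
        · subst hkk'
          have hlT : (if k1 = k then l1 else k1) ∈ T := by
            split_ifs
            · exact hl1
            · exact hk1
          have hlk : (if k1 = k then l1 else k1) ≠ k := by
            split_ifs with h
            · rw [← h]; exact Ne.symm hk1l1
            · exact h
          obtain ⟨hlE, hlu, hlv, hlL⟩ := hTsub hlT
          exact hnp (K1_eq huv (Ne.symm hlk) hku hkv hlu hlv hkL hlL hPuk hPvk'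
            (hTpar k hkT _ hlT (Ne.symm hlk)))
        · exact hnp (K1_ne huv hkk' hku hkv hk'u hk'v hkL hk'L hPuk hPvk')
      · apply essNot hu
        exact vanish (Ne.symm hk1v) (Ne.symm hl1v) hk1l1 huv (Ne.symm hk1u) (Ne.symm hl1u)
          (hallv k1 hk1) (hallv l1 hl1) (hTpar k1 hk1 l1 hl1 hk1l1)
    · apply essNot hv
      exact vanish (Ne.symm hk1u) (Ne.symm hl1u) hk1l1 (Ne.symm huv) (Ne.symm hk1v)
        (Ne.symm hl1v) (hallu k1 hk1) (hallu l1 hl1) (hTpar k1 hk1 l1 hl1 hk1l1)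




lemma essArity_eq (f : BFn n) : essArity f = (EF f).card := rfl

lemma minor_identify (f : BFn n) (u v : Fin n) : Minor (identify f u v) f := by
  refine ⟨fun t => if t = u then v else t, fun a => ?_⟩
  unfold identify
  congr 1
  funext t
  by_cases ht : t = u
  · subst ht; simp
  · simp [ht]


end S5

/-- Salomaa: the arity gap of a Boolean function with at least
two essential variables is at most 2. -/
theorem stmt5 (F : BF) (h : 2 ≤ essS F) : arityGap F ≤ 2 := by
  obtain ⟨n, f⟩ := F
  have h2 : 2 ≤ (S5.EF f).card := h
  obtain ⟨u, v, hu, hv, huv, hbad⟩ := S5.core f h2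
  have hminor : MinorS ⟨n, identify f u v⟩ ⟨n, f⟩ := S5.minor_identify f u v
  have hsub := S5.EF_identify_subset f u v huv hv
  have hlt : (S5.EF (identify f u v)).card < (S5.EF f).card :=
    lt_of_le_of_lt (Finset.card_le_card hsub) (Finset.card_erase_lt_of_mem hu)
  have hnotminor : ¬ MinorS ⟨n, f⟩ ⟨n, identify f u v⟩ := by
    rintro ⟨σ, hσ⟩
    have := S5.card_EF_le_of_minor f (identify f u v) σ hσ
    omega
  have hstrict : StrictMinorS ⟨n, identify f u v⟩ ⟨n, f⟩ := ⟨hminor, hnotminor⟩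
  have hineq := S5.card_EF_identify f u v huv hu hv hbad
  have hd : essS (⟨n, f⟩ : BF) - essS (⟨n, identify f u v⟩ : BF) ≤ 2 := by
    show essArity f - essArity (identify f u v) ≤ 2
    rw [S5.essArity_eq, S5.essArity_eq]
    omega
  have hmem : essS (⟨n, f⟩ : BF) - essS (⟨n, identify f u v⟩ : BF) ∈
      {d : ℕ | ∃ G : BF, StrictMinorS G ⟨n, f⟩ ∧ d = essS ⟨n, f⟩ - essS G} :=
    ⟨⟨n, identify f u v⟩, hstrict, rfl⟩
  calc arityGap ⟨n, f⟩ ≤ essS (⟨n, f⟩ : BF) - essS (⟨n, identify f u v⟩ : BF) :=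
        Nat.sInf_le hmem
    _ ≤ 2 := hd
end

section
/- If g is a lower cover of a Boolean function f with ess g < ess f − 1, then g is, up to equivalence, the unique lower cover of f. -/
open Classical

namespace Stmt10Aux

/-- sign character of `ZMod 2` -/
def sgn (c : ZMod 2) : ℤ := if c = 0 then 1 else -1

lemma zmod2_cases (c : ZMod 2) : c = 0 ∨ c = 1 := by
  fin_cases c <;> simp
  exacts [Or.inl rfl, Or.inr rfl]

lemma sgn_sq (c : ZMod 2) : sgn c * sgn c = 1 := by
  rcases zmod2_cases c with h | h <;> simp [sgn, h]

lemma sgn_inj {a b : ZMod 2} (h : sgn a = sgn b) : a = b := by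
  rcases (zmod2_cases a) with ha | ha <;>
    rcases (zmod2_cases b) with hb | hb <;>
      simp_all [sgn]

lemma sgn_pair (a b : ZMod 2) : sgn a * sgn b = if a = b then 1 else -1 := by
  rcases (zmod2_cases a) with ha | ha <;>
    rcases (zmod2_cases b) with hb | hb <;>
      simp_all [sgn] <;> decide

lemma sgn_add_one (c : ZMod 2) : sgn (c + 1) = - sgn c := by
  rcases (zmod2_cases c) with h | h <;> simp [sgn, h] <;> decide

lemma zmod2_add_one_ne (c : ZMod 2) : c + 1 ≠ c := by
  rcases (zmod2_cases c) with h | h <;> simp [h] <;> decide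

lemma zmod2_eq_or_eq_add_one (c d : ZMod 2) : c = d ∨ c = d + 1 := by
  rcases (zmod2_cases c) with h | h <;>
    rcases (zmod2_cases d) with h' | h' <;> simp [h, h'] <;> decide

variable {n : ℕ}

/-- flip coordinate `u` -/
def flp (x : Fin n → ZMod 2) (u : Fin n) : Fin n → ZMod 2 :=
  Function.update x u (x u + 1)

lemma flp_self (x : Fin n → ZMod 2) (u : Fin n) : flp x u u = x u + 1 := by
  simp [flp]

lemma flp_ne (x : Fin n → ZMod 2) {u t : Fin n} (h : t ≠ u) : flp x u t = x t := by
  simp [flp, Function.update_of_ne h]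

lemma flp_flp (x : Fin n → ZMod 2) (u : Fin n) : flp (flp x u) u = x := by
  funext t
  by_cases h : t = u
  · subst h
    rw [flp_self, flp_self]
    rcases (zmod2_cases (x t)) with h | h <;> simp [h] <;> decide
  · rw [flp_ne _ h, flp_ne _ h]

lemma flp_comm (x : Fin n → ZMod 2) {u v : Fin n} (h : u ≠ v) :
    flp (flp x u) v = flp (flp x v) u := by
  show Function.update (flp x u) v ((flp x u) v + 1)
      = Function.update (flp x v) u ((flp x v) u + 1)
  rw [flp_ne x (Ne.symm h), flp_ne x h]
  show Function.update (Function.update x u (x u + 1)) v (x v + 1)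
      = Function.update (Function.update x v (x v + 1)) u (x u + 1)
  rw [Function.update_comm h]

lemma flp_ne_self (x : Fin n → ZMod 2) (u : Fin n) : flp x u ≠ x := by
  intro h
  have := congrFun h u
  rw [flp_self] at this
  exact zmod2_add_one_ne _ this

end Stmt10Aux

namespace Stmt10Aux

variable {n m : ℕ}

/-- walk lemma: if `f u ≠ f v` then they differ at some essential coordinate. -/
lemma exists_essential_diff (f : BFn n) :
    ∀ k (u v : Fin n → ZMod 2), (Finset.univ.filter fun t => u t ≠ v t).card = k →
      f u ≠ f v → ∃ t, u t ≠ v t ∧ Essential f t := by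
  intro k
  induction k using Nat.strong_induction_on with
  | _ k ih =>
    intro u v hcard hne
    have hnonempty : (Finset.univ.filter fun t => u t ≠ v t).Nonempty := by
      by_contra hempty
      rw [Finset.not_nonempty_iff_eq_empty] at hempty
      apply hne
      have : u = v := by
        funext t
        by_contra ht
        have : t ∈ Finset.univ.filter fun t => u t ≠ v t := by
          simp [ht]
        rw [hempty] at this
        exact absurd this (Finset.notMem_empty t)
      rw [this]
    obtain ⟨t₀, ht₀⟩ := hnonempty
    have ht₀' : u t₀ ≠ v t₀ := (Finset.mem_filter.mp ht₀).2
    set u' := Function.update u t₀ (v t₀) with hu'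
    by_cases hf : f u ≠ f u'
    · refine ⟨t₀, ht₀', u, u', fun j hj => ?_, hf⟩
      rw [hu', Function.update_of_ne hj]
    · push_neg at hf
      have hne' : f u' ≠ f v := by rw [← hf]; exact hne
      have hsub : (Finset.univ.filter fun t => u' t ≠ v t)
          = (Finset.univ.filter fun t => u t ≠ v t).erase t₀ := by
        ext t
        simp only [Finset.mem_filter, Finset.mem_erase, Finset.mem_univ, true_and]
        constructor
        · intro ht
          have htne : t ≠ t₀ := by
            intro heq; subst heq
            rw [hu', Function.update_self] at ht
            exact ht rfl
          rw [hu', Function.update_of_ne htne] at ht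
          exact ⟨htne, ht⟩
        · intro ⟨htne, ht⟩
          rw [hu', Function.update_of_ne htne]
          exact ht
      have hlt : (Finset.univ.filter fun t => u' t ≠ v t).card < k := by
        rw [hsub, ← hcard]
        exact Finset.card_erase_lt_of_mem ht₀
      obtain ⟨t, htuv, htess⟩ := ih _ hlt u' v rfl hne'
      have htne : t ≠ t₀ := by
        intro heq; subst heq
        rw [hu', Function.update_self] at htuv
        exact htuv rfl
      refine ⟨t, ?_, htess⟩
      rw [hu', Function.update_of_ne htne] at htuv
      exact htuv

lemma exists_essential_diff' (f : BFn n) {u v : Fin n → ZMod 2} (hne : f u ≠ f v) :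
    ∃ t, u t ≠ v t ∧ Essential f t :=
  exists_essential_diff f _ u v rfl hne

/-- `f` is determined by its essential coordinates. -/
lemma eq_on_essential (f : BFn n) {u v : Fin n → ZMod 2}
    (h : ∀ t, Essential f t → u t = v t) : f u = f v := by
  by_contra hne
  obtain ⟨t, ht, htess⟩ := exists_essential_diff' f hne
  exact ht (h t htess)

/-- Lemma M: essential variables of a minor lift along the substitution. -/
lemma essential_lift {g : BFn m} {f : BFn n} {σ : Fin n → Fin m}
    (hmin : ∀ a : Fin m → ZMod 2, g a = f (fun i => a (σ i)))
    {k : Fin m} (hk : Essential g k) :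
    ∃ t : Fin n, Essential f t ∧ σ t = k := by
  obtain ⟨a, b, hab, hne⟩ := hk
  rw [hmin a, hmin b] at hne
  obtain ⟨t, ht, htess⟩ := exists_essential_diff' f hne
  refine ⟨t, htess, ?_⟩
  by_contra hst
  exact ht (hab (σ t) hst)

end Stmt10Aux

namespace Stmt10Aux

variable {n : ℕ}

noncomputable def chi (S : Finset (Fin n)) (x : Fin n → ZMod 2) : ℤ :=
  ∏ t ∈ S, sgn (x t)

noncomputable def four (f : BFn n) (S : Finset (Fin n)) : ℤ :=
  ∑ x : Fin n → ZMod 2, sgn (f x) * chi S x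

lemma chi_flp_mem {S : Finset (Fin n)} {u : Fin n} (hu : u ∈ S)
    (x : Fin n → ZMod 2) : chi S (flp x u) = - chi S x := by
  unfold chi
  rw [← Finset.mul_prod_erase S _ hu, ← Finset.mul_prod_erase S (fun t => sgn (x t)) hu]
  have h1 : ∀ t ∈ S.erase u, sgn (flp x u t) = sgn (x t) := by
    intro t ht
    rw [flp_ne x (Finset.ne_of_mem_erase ht)]
  rw [Finset.prod_congr rfl h1, flp_self, sgn_add_one]
  ring

lemma chi_flp_not_mem {S : Finset (Fin n)} {u : Fin n} (hu : u ∉ S)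
    (x : Fin n → ZMod 2) : chi S (flp x u) = chi S x := by
  unfold chi
  apply Finset.prod_congr rfl
  intro t ht
  rw [flp_ne x (by rintro rfl; exact hu ht)]

lemma prod_symmDiff_sq_one (a : Fin n → ℤ) (ha : ∀ t, a t * a t = 1)
    (S P : Finset (Fin n)) :
    ∏ t ∈ (symmDiff S P), a t = (∏ t ∈ S, a t) * ∏ t ∈ P, a t := by
  have hdisj : Disjoint (symmDiff S P) (S ∩ P) := by
    rw [Finset.disjoint_left]
    intro t ht hinter
    rw [Finset.mem_symmDiff] at ht
    rw [Finset.mem_inter] at hinter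
    tauto
  have hunion : (symmDiff S P) ∪ (S ∩ P) = S ∪ P := by
    ext t
    simp only [Finset.mem_union, Finset.mem_symmDiff, Finset.mem_inter]
    tauto
  have h1 : (∏ t ∈ (symmDiff S P), a t) * ∏ t ∈ (S ∩ P), a t = ∏ t ∈ S ∪ P, a t := by
    rw [← Finset.prod_union hdisj, hunion]
  have h2 : (∏ t ∈ S ∪ P, a t) * ∏ t ∈ (S ∩ P), a t
      = (∏ t ∈ S, a t) * ∏ t ∈ P, a t := Finset.prod_union_inter
  have h3 : (∏ t ∈ (S ∩ P), a t) * ∏ t ∈ (S ∩ P), a t = 1 := by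
    rw [← Finset.prod_mul_distrib]
    exact Finset.prod_eq_one fun t _ => ha t
  calc ∏ t ∈ (symmDiff S P), a t
      = (∏ t ∈ (symmDiff S P), a t) * ((∏ t ∈ (S ∩ P), a t) * ∏ t ∈ (S ∩ P), a t) := by
        rw [h3, mul_one]
    _ = ((∏ t ∈ (symmDiff S P), a t) * (∏ t ∈ (S ∩ P), a t)) * ∏ t ∈ (S ∩ P), a t := by ring
    _ = (∏ t ∈ S ∪ P, a t) * ∏ t ∈ (S ∩ P), a t := by rw [h1]
    _ = (∏ t ∈ S, a t) * ∏ t ∈ P, a t := h2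

lemma chi_symmDiff_pair {p v : Fin n} (hpv : p ≠ v) (S : Finset (Fin n))
    (x : Fin n → ZMod 2) :
    chi (symmDiff S ({p, v} : Finset (Fin n))) x = chi S x * (sgn (x p) * sgn (x v)) := by
  unfold chi
  rw [prod_symmDiff_sq_one _ (fun t => sgn_sq (x t)), Finset.prod_pair hpv]

end Stmt10Aux

namespace Stmt10Aux

variable {n : ℕ}

/-- B-type Fourier relation. -/
lemma four_B {f : BFn n} {p v u : Fin n} (hup : u ≠ p) (huv : u ≠ v) (hpv : p ≠ v)
    (hflip : ∀ x, x p = x v → f (flp x u) = f x) {S : Finset (Fin n)} (huS : u ∈ S) :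
    four f S + four f (symmDiff S ({p, v} : Finset (Fin n))) = 0 := by
  have key : ∀ x : Fin n → ZMod 2,
      sgn (f x) * chi S x + sgn (f x) * chi (symmDiff S ({p, v} : Finset (Fin n))) x
      = if x p = x v then 2 * (sgn (f x) * chi S x) else 0 := by
    intro x
    rw [chi_symmDiff_pair hpv, sgn_pair]
    by_cases h : x p = x v <;> simp [h] <;> ring
  have hsum : four f S + four f (symmDiff S ({p, v} : Finset (Fin n)))
      = ∑ x : Fin n → ZMod 2, if x p = x v then 2 * (sgn (f x) * chi S x) else 0 := by
    unfold four
    rw [← Finset.sum_add_distrib]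
    exact Finset.sum_congr rfl fun x _ => key x
  rw [hsum, ← Finset.sum_filter]
  have hzero : ∑ x ∈ Finset.univ.filter (fun x : Fin n → ZMod 2 => x p = x v),
      2 * (sgn (f x) * chi S x) = 0 := by
    apply Finset.sum_involution (fun x _ => flp x u)
    · intro x hx
      rw [Finset.mem_filter] at hx
      rw [hflip x hx.2, chi_flp_mem huS]
      ring
    · intro x _ _
      exact flp_ne_self x u
    · intro x hx
      rw [Finset.mem_filter] at hx ⊢
      refine ⟨Finset.mem_univ _, ?_⟩
      rw [flp_ne x (Ne.symm hup), flp_ne x (Ne.symm huv)]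
      exact hx.2
    · intro x _
      exact flp_flp x u
  exact hzero

end Stmt10Aux

namespace Stmt10Aux

variable {n : ℕ}

/-- A-type Fourier relation. -/
lemma four_A {f : BFn n} {p v : Fin n} (hpv : p ≠ v)
    (hflip : ∀ x, x p = x v → f (flp (flp x p) v) = f x)
    {S : Finset (Fin n)} (hpS : p ∈ S) (hvS : v ∉ S) :
    four f S + four f (symmDiff S ({p, v} : Finset (Fin n))) = 0 := by
  have key : ∀ x : Fin n → ZMod 2,
      sgn (f x) * chi S x + sgn (f x) * chi (symmDiff S ({p, v} : Finset (Fin n))) x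
      = if x p = x v then 2 * (sgn (f x) * chi S x) else 0 := by
    intro x
    rw [chi_symmDiff_pair hpv, sgn_pair]
    by_cases h : x p = x v <;> simp [h] <;> ring
  have hsum : four f S + four f (symmDiff S ({p, v} : Finset (Fin n)))
      = ∑ x : Fin n → ZMod 2, if x p = x v then 2 * (sgn (f x) * chi S x) else 0 := by
    unfold four
    rw [← Finset.sum_add_distrib]
    exact Finset.sum_congr rfl fun x _ => key x
  rw [hsum, ← Finset.sum_filter]
  have hchi : ∀ x : Fin n → ZMod 2, chi S (flp (flp x p) v) = - chi S x := by
    intro x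
    rw [chi_flp_not_mem hvS, chi_flp_mem hpS]
  have hmem : ∀ x : Fin n → ZMod 2, x p = x v →
      (flp (flp x p) v) p = (flp (flp x p) v) v := by
    intro x hx
    rw [flp_ne _ hpv, flp_self, flp_self, flp_ne _ (Ne.symm hpv), hx]
  apply Finset.sum_involution (fun x _ => flp (flp x p) v)
  · intro x hx
    rw [Finset.mem_filter] at hx
    rw [hflip x hx.2, hchi]
    ring
  · intro x hx _
    intro heq
    have := congrFun heq p
    rw [flp_ne _ hpv, flp_self] at this
    exact zmod2_add_one_ne _ this
  · intro x hx
    rw [Finset.mem_filter] at hx ⊢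
    exact ⟨Finset.mem_univ _, hmem x hx.2⟩
  · intro x hx
    rw [flp_comm (flp x p) (Ne.symm hpv), flp_flp, flp_flp]

end Stmt10Aux

namespace Stmt10Aux

variable {n : ℕ}

lemma sum_chi_mul (x y : Fin n → ZMod 2) :
    ∑ S : Finset (Fin n), chi S x * chi S y = if x = y then 2 ^ n else 0 := by
  have h1 : ∀ S : Finset (Fin n), chi S x * chi S y = ∏ t ∈ S, (sgn (x t) * sgn (y t)) := by
    intro S
    rw [Finset.prod_mul_distrib]
    rfl
  rw [Finset.sum_congr rfl fun S _ => h1 S]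
  have h2 : ∑ S : Finset (Fin n), ∏ t ∈ S, (sgn (x t) * sgn (y t))
      = ∏ t : Fin n, (sgn (x t) * sgn (y t) + 1) := by
    rw [Finset.prod_add]
    rw [← Finset.powerset_univ]
    apply Finset.sum_congr rfl
    intro S _
    simp
  rw [h2]
  by_cases hxy : x = y
  · subst hxy
    rw [if_pos rfl]
    have : ∀ t : Fin n, sgn (x t) * sgn (x t) + 1 = 2 := by
      intro t; rw [sgn_sq]; norm_num
    rw [Finset.prod_congr rfl fun t _ => this t, Finset.prod_const]
    simp
  · rw [if_neg hxy]
    have : ∃ t, x t ≠ y t := by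
      by_contra hno
      push_neg at hno
      exact hxy (funext hno)
    obtain ⟨t, ht⟩ := this
    apply Finset.prod_eq_zero (Finset.mem_univ t)
    rw [sgn_pair, if_neg ht]
    ring

lemma four_inversion (f : BFn n) (y : Fin n → ZMod 2) :
    ∑ S : Finset (Fin n), four f S * chi S y = 2 ^ n * sgn (f y) := by
  unfold four
  have h1 : ∀ S : Finset (Fin n),
      (∑ x : Fin n → ZMod 2, sgn (f x) * chi S x) * chi S y
      = ∑ x : Fin n → ZMod 2, sgn (f x) * (chi S x * chi S y) := by
    intro S
    rw [Finset.sum_mul]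
    apply Finset.sum_congr rfl
    intro x _
    ring
  rw [Finset.sum_congr rfl fun S _ => h1 S, Finset.sum_comm]
  have h2 : ∀ x : Fin n → ZMod 2,
      ∑ S : Finset (Fin n), sgn (f x) * (chi S x * chi S y)
      = sgn (f x) * if x = y then 2 ^ n else 0 := by
    intro x
    rw [← Finset.mul_sum, sum_chi_mul]
  rw [Finset.sum_congr rfl fun x _ => h2 x]
  have h3 : ∀ x : Fin n → ZMod 2, (sgn (f x) * if x = y then 2 ^ n else 0)
      = if x = y then sgn (f x) * 2 ^ n else 0 := by
    intro x; by_cases hxy : x = y <;> simp [hxy]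
  rw [Finset.sum_congr rfl fun x _ => h3 x]
  rw [Finset.sum_ite_eq' Finset.univ y (fun x => sgn (f x) * 2 ^ n)]
  simp [mul_comm]

lemma flip_invariant_of_four_vanish {f : BFn n} {u : Fin n}
    (hvan : ∀ S : Finset (Fin n), u ∈ S → four f S = 0) :
    ∀ y, f (flp y u) = f y := by
  intro y
  have h1 : ∑ S : Finset (Fin n), four f S * chi S (flp y u)
      = ∑ S : Finset (Fin n), four f S * chi S y := by
    apply Finset.sum_congr rfl
    intro S _
    by_cases hu : u ∈ S
    · rw [hvan S hu]; ring
    · rw [chi_flp_not_mem hu]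
  rw [four_inversion, four_inversion] at h1
  have h2 : sgn (f (flp y u)) = sgn (f y) := by
    have hpow : (2 : ℤ) ^ n ≠ 0 := pow_ne_zero n (by norm_num)
    exact mul_left_cancel₀ hpow h1
  exact sgn_inj h2

lemma not_essential_of_flip_invariant {f : BFn n} {u : Fin n}
    (hinv : ∀ y, f (flp y u) = f y) : ¬ Essential f u := by
  rintro ⟨a, b, hab, hne⟩
  rcases zmod2_eq_or_eq_add_one (b u) (a u) with h | h
  · apply hne
    apply congrArg
    funext t
    by_cases ht : t = u
    · subst ht; exact h.symm
    · exact hab t ht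
  · apply hne
    have hb : b = flp a u := by
      funext t
      by_cases ht : t = u
      · subst ht; rw [flp_self]; exact h
      · rw [flp_ne _ ht]; exact (hab t ht).symm
    rw [hb, hinv a]

/-- If `u` is essential, some Fourier coefficient containing `u` is nonzero. -/
lemma exists_four_ne_zero {f : BFn n} {u : Fin n} (hu : Essential f u) :
    ∃ S : Finset (Fin n), u ∈ S ∧ four f S ≠ 0 := by
  by_contra hno
  push_neg at hno
  exact not_essential_of_flip_invariant
    (flip_invariant_of_four_vanish fun S hS => hno S hS) hu

end Stmt10Aux

namespace Stmt10Aux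

variable {n : ℕ}

lemma mem_symmDiff_of {S P : Finset (Fin n)} {u : Fin n} (hu : u ∈ S) (hP : u ∉ P) :
    u ∈ symmDiff S P := by
  rw [Finset.mem_symmDiff]; tauto

lemma not_mem_symmDiff_of {S P : Finset (Fin n)} {u : Fin n} (hu : u ∈ S) (hP : u ∈ P) :
    u ∉ symmDiff S P := by
  rw [Finset.mem_symmDiff]; tauto

lemma symmDiff_cancel (S P : Finset (Fin n)) : symmDiff (symmDiff S P) P = S := by
  ext t
  simp only [Finset.mem_symmDiff]
  tauto

lemma symmDiff_pair_pair {i v v' : Fin n} {S : Finset (Fin n)}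
    (hiv : i ≠ v) (hiv' : i ≠ v') (hvv' : v ≠ v') (hv : v ∈ S) (hv' : v' ∈ S) :
    symmDiff (symmDiff S ({i, v} : Finset (Fin n))) ({v', v} : Finset (Fin n))
      = symmDiff S ({i, v'} : Finset (Fin n)) := by
  ext t
  simp only [Finset.mem_symmDiff, Finset.mem_insert, Finset.mem_singleton]
  by_cases h1 : t = i <;> by_cases h2 : t = v <;> by_cases h3 : t = v' <;>
    by_cases h4 : t ∈ S <;> simp_all <;> tauto

/-- The key combinatorial induction. -/
lemma propQ (f : BFn n) (i : Fin n) :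
    ∀ q (Z : Finset (Fin n)), Z.card = q → 2 ≤ Z.card → i ∉ Z →
    (∀ v ∈ Z, Essential f v) →
    (∀ v ∈ Z, ∃ u ∈ Z, u ≠ v ∧ ∀ x, x i = x v → f (flp x u) = f x) →
    (∀ v' ∈ Z, ∀ v ∈ Z, v' ≠ v →
      (∀ x, x v' = x v → f (flp (flp x v') v) = f x) ∨
      (∃ u ∈ Z, u ≠ v' ∧ u ≠ v ∧ ∀ x, x v' = x v → f (flp x u) = f x)) →
    False := by
  intro q
  induction q using Nat.strong_induction_on with
  | _ q ih =>
    intro Z hcard h2 hiZ hess hC1 hC2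
    classical
    set 𝒮 := Finset.univ.filter
      (fun S : Finset (Fin n) => four f S ≠ 0 ∧ (S ∩ Z).Nonempty) with h𝒮
    by_cases hS : 𝒮.Nonempty
    · obtain ⟨S₀, hS₀mem, hmax⟩ := Finset.exists_max_image 𝒮 (fun S => (S ∩ Z).card) hS
      rw [h𝒮, Finset.mem_filter] at hS₀mem
      obtain ⟨-, hS₀four, hS₀ne⟩ := hS₀mem
      set M := Z \ S₀ with hM
      -- growth lemma for cross pairs
      have hgrow1 : ∀ v ∈ M, ∀ u, u ∈ Z → u ≠ v →
          (∀ x, x i = x v → f (flp x u) = f x) → u ∈ M := by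
        intro v hvM u huZ huv hflip
        have hvZ : v ∈ Z := (Finset.mem_sdiff.mp hvM).1
        have hvS₀ : v ∉ S₀ := (Finset.mem_sdiff.mp hvM).2
        rw [hM, Finset.mem_sdiff]
        refine ⟨huZ, ?_⟩
        intro huS₀
        have hui : u ≠ i := by rintro rfl; exact hiZ huZ
        have hiv : i ≠ v := by rintro rfl; exact hiZ hvZ
        have hrel := four_B hui huv hiv hflip
          (S := S₀) (by exact huS₀)
        set S' := symmDiff S₀ ({i, v} : Finset (Fin n)) with hS'
        have hS'four : four f S' ≠ 0 := by
          intro h0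
          rw [h0, add_zero] at hrel
          exact hS₀four hrel
        have hS'capZ : S' ∩ Z = insert v (S₀ ∩ Z) := by
          ext t
          simp only [hS', Finset.mem_inter, Finset.mem_symmDiff, Finset.mem_insert,
            Finset.mem_singleton]
          constructor
          · rintro ⟨h1, h2⟩
            rcases h1 with ⟨htS, hnP⟩ | ⟨hP, hnS⟩
            · exact Or.inr ⟨htS, h2⟩
            · rcases hP with rfl | rfl
              · exact absurd h2 hiZ
              · exact Or.inl rfl
          · rintro (rfl | ⟨htS, htZ⟩)
            · exact ⟨Or.inr ⟨Or.inr rfl, hvS₀⟩, hvZ⟩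
            · have hti : t ≠ i := by rintro rfl; exact hiZ htZ
              have htv : t ≠ v := by rintro rfl; exact hvS₀ htS
              exact ⟨Or.inl ⟨htS, by tauto⟩, htZ⟩
        have hS'mem : S' ∈ 𝒮 := by
          rw [h𝒮, Finset.mem_filter]
          exact ⟨Finset.mem_univ _, hS'four, ⟨v, by
            rw [hS'capZ]; exact Finset.mem_insert_self _ _⟩⟩
        have := hmax S' hS'mem
        rw [hS'capZ, Finset.card_insert_of_notMem (by
          rw [Finset.mem_inter]; tauto)] at this
        omega
      -- growth lemma for in-Z pairs
      have hgrow2 : ∀ v' ∈ M, ∀ v ∈ M, v' ≠ v → ∀ u, u ∈ Z → u ≠ v' → u ≠ v →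
          (∀ x, x v' = x v → f (flp x u) = f x) → u ∈ M := by
        intro v' hv'M v hvM hv'v u huZ huv' huv hflip
        have hv'Z : v' ∈ Z := (Finset.mem_sdiff.mp hv'M).1
        have hv'S₀ : v' ∉ S₀ := (Finset.mem_sdiff.mp hv'M).2
        have hvZ : v ∈ Z := (Finset.mem_sdiff.mp hvM).1
        have hvS₀ : v ∉ S₀ := (Finset.mem_sdiff.mp hvM).2
        rw [hM, Finset.mem_sdiff]
        refine ⟨huZ, ?_⟩
        intro huS₀
        have hrel := four_B huv' huv hv'v hflip (S := S₀) huS₀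
        set S' := symmDiff S₀ ({v', v} : Finset (Fin n)) with hS'
        have hS'four : four f S' ≠ 0 := by
          intro h0
          rw [h0, add_zero] at hrel
          exact hS₀four hrel
        have hsub : insert v' (insert v (S₀ ∩ Z)) ⊆ S' ∩ Z := by
          intro t ht
          simp only [Finset.mem_insert] at ht
          simp only [hS', Finset.mem_inter, Finset.mem_symmDiff, Finset.mem_insert,
            Finset.mem_singleton]
          rcases ht with rfl | rfl | htmem
          · exact ⟨Or.inr ⟨Or.inl rfl, hv'S₀⟩, hv'Z⟩
          · exact ⟨Or.inr ⟨Or.inr rfl, hvS₀⟩, hvZ⟩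
          · rw [Finset.mem_inter] at htmem
            have htv' : t ≠ v' := by rintro rfl; exact hv'S₀ htmem.1
            have htv : t ≠ v := by rintro rfl; exact hvS₀ htmem.1
            exact ⟨Or.inl ⟨htmem.1, by tauto⟩, htmem.2⟩
        have hS'mem : S' ∈ 𝒮 := by
          rw [h𝒮, Finset.mem_filter]
          refine ⟨Finset.mem_univ _, hS'four, ⟨v', hsub (by simp)⟩⟩
        have hle := hmax S' hS'mem
        have hcard2 : (insert v' (insert v (S₀ ∩ Z))).card = (S₀ ∩ Z).card + 2 := by
          rw [Finset.card_insert_of_notMem, Finset.card_insert_of_notMem]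
          · rw [Finset.mem_inter]; tauto
          · simp only [Finset.mem_insert, Finset.mem_inter]
            push_neg
            exact ⟨hv'v, fun h _ => hv'S₀ h⟩
        have hge := Finset.card_le_card hsub
        omega
      by_cases hMe : M = ∅
      · -- Z ⊆ S₀ : the kill cycle
        have hZS₀ : Z ⊆ S₀ := by
          intro t ht
          by_contra hts
          have : t ∈ M := by rw [hM, Finset.mem_sdiff]; exact ⟨ht, hts⟩
          rw [hMe] at this
          exact Finset.notMem_empty _ this
        obtain ⟨v, hvZ, v', hv'Z, hvv'⟩ := Finset.one_lt_card.mp h2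
        obtain ⟨u₁, hu₁Z, hu₁v, hu₁flip⟩ := hC1 v hvZ
        obtain ⟨u₂, hu₂Z, hu₂v', hu₂flip⟩ := hC1 v' hv'Z
        have hiv : i ≠ v := by rintro rfl; exact hiZ hvZ
        have hiv' : i ≠ v' := by rintro rfl; exact hiZ hv'Z
        have hu₁i : u₁ ≠ i := by rintro rfl; exact hiZ hu₁Z
        have hu₂i : u₂ ≠ i := by rintro rfl; exact hiZ hu₂Z
        set T₁ := symmDiff S₀ ({i, v} : Finset (Fin n)) with hT₁
        set T₂ := symmDiff S₀ ({i, v'} : Finset (Fin n)) with hT₂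
        have hpair : symmDiff T₁ ({v', v} : Finset (Fin n)) = T₂ :=
          symmDiff_pair_pair hiv hiv' hvv' (hZS₀ hvZ) (hZS₀ hv'Z)
        -- rel1
        have hrel1 := four_B hu₁i hu₁v hiv hu₁flip (S := S₀) (hZS₀ hu₁Z)
        -- rel3
        have hu₂T₂ : u₂ ∈ T₂ := by
          apply mem_symmDiff_of (hZS₀ hu₂Z)
          simp only [Finset.mem_insert, Finset.mem_singleton]
          push_neg
          exact ⟨hu₂i, hu₂v'⟩
        have hrel3 := four_B hu₂i hu₂v' hiv' hu₂flip (S := T₂) hu₂T₂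
        rw [hT₂, symmDiff_cancel] at hrel3
        -- rel2
        have hv'T₁ : v' ∈ T₁ := by
          apply mem_symmDiff_of (hZS₀ hv'Z)
          simp only [Finset.mem_insert, Finset.mem_singleton]
          push_neg
          exact ⟨Ne.symm hiv', Ne.symm hvv'⟩
        have hvT₁ : v ∉ T₁ := by
          apply not_mem_symmDiff_of (hZS₀ hvZ)
          simp
        have hrel2 : four f T₁ + four f T₂ = 0 := by
          rcases hC2 v' hv'Z v hvZ (Ne.symm hvv') with hA | ⟨u₀, hu₀Z, hu₀v', hu₀v, hu₀flip⟩
          · have := four_A (Ne.symm hvv') hA (S := T₁) hv'T₁ hvT₁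
            rwa [hpair] at this
          · have hu₀T₁ : u₀ ∈ T₁ := by
              apply mem_symmDiff_of (hZS₀ hu₀Z)
              simp only [Finset.mem_insert, Finset.mem_singleton]
              push_neg
              exact ⟨by rintro rfl; exact hiZ hu₀Z, hu₀v⟩
            have := four_B hu₀v' hu₀v (Ne.symm hvv') hu₀flip (S := T₁) hu₀T₁
            rwa [hpair] at this
        -- combine
        have : four f S₀ = 0 := by linarith
        exact hS₀four this
      · -- M nonempty : recursion
        have hMne : M.Nonempty := Finset.nonempty_iff_ne_empty.mpr hMe
        have hMsubZ : M ⊆ Z := Finset.sdiff_subset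
        obtain ⟨v₀, hv₀M⟩ := hMne
        have hv₀Z : v₀ ∈ Z := hMsubZ hv₀M
        obtain ⟨u₀, hu₀Z, hu₀v₀, hu₀flip⟩ := hC1 v₀ hv₀Z
        have hu₀M : u₀ ∈ M := hgrow1 v₀ hv₀M u₀ hu₀Z hu₀v₀ hu₀flip
        have hM2 : 2 ≤ M.card := Finset.one_lt_card.mpr ⟨u₀, hu₀M, v₀, hv₀M, hu₀v₀⟩
        have hMlt : M.card < q := by
          rw [← hcard]
          apply Finset.card_lt_card
          rw [Finset.ssubset_iff_of_subset hMsubZ]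
          obtain ⟨w, hw⟩ := hS₀ne
          rw [Finset.mem_inter] at hw
          exact ⟨w, hw.2, by rw [hM, Finset.mem_sdiff]; push_neg; intro _; exact hw.1⟩
        apply ih M.card hMlt M rfl hM2 (fun h => hiZ (hMsubZ h))
          (fun v hv => hess v (hMsubZ hv))
        · -- C1 for M
          intro v hvM
          obtain ⟨u, huZ, huv, huflip⟩ := hC1 v (hMsubZ hvM)
          exact ⟨u, hgrow1 v hvM u huZ huv huflip, huv, huflip⟩
        · -- C2 for M
          intro v' hv'M v hvM hv'v
          rcases hC2 v' (hMsubZ hv'M) v (hMsubZ hvM) hv'v with hA | ⟨u, huZ, huv', huv, huflip⟩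
          · exact Or.inl hA
          · exact Or.inr ⟨u, hgrow2 v' hv'M v hvM hv'v u huZ huv' huv huflip, huv', huv, huflip⟩
    · -- no nonzero coefficient meets Z : contradiction with essentiality
      obtain ⟨v, hvZ⟩ := Finset.card_pos.mp (by omega : 0 < Z.card)
      obtain ⟨S, hvS, hSfour⟩ := exists_four_ne_zero (hess v hvZ)
      exact hS ⟨S, by
        rw [h𝒮, Finset.mem_filter]
        exact ⟨Finset.mem_univ _, hSfour, ⟨v, Finset.mem_inter.mpr ⟨hvS, hvZ⟩⟩⟩⟩

end Stmt10Aux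


namespace Stmt10Aux

variable {n m p : ℕ}

lemma minor_trans {g : BFn m} {f : BFn n} {h : BFn p}
    (h1 : Minor g f) (h2 : Minor f h) : Minor g h := by
  obtain ⟨σ, hσ⟩ := h1
  obtain ⟨τ, hτ⟩ := h2
  exact ⟨fun t => σ (τ t), fun a => by rw [hσ, hτ]⟩

lemma minorS_trans {A B C : BF} (h1 : MinorS A B) (h2 : MinorS B C) : MinorS A C :=
  minor_trans h1 h2

lemma equivS_symm {A B : BF} (h : EquivS A B) : EquivS B A := ⟨h.2, h.1⟩

lemma equivS_trans {A B C : BF} (h1 : EquivS A B) (h2 : EquivS B C) : EquivS A C :=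
  ⟨minorS_trans h1.1 h2.1, minorS_trans h2.2 h1.2⟩

lemma essArity_le_of_minor {g : BFn m} {f : BFn n} (h : Minor g f) :
    essArity g ≤ essArity f := by
  classical
  obtain ⟨σ, hσ⟩ := h
  by_cases he : (Finset.univ.filter fun t => Essential g t) = ∅
  · unfold essArity
    rw [he]
    simp
  · obtain ⟨k₀, hk₀⟩ := Finset.nonempty_iff_ne_empty.mpr he
    have hk₀' : Essential g k₀ := (Finset.mem_filter.mp hk₀).2
    have hmain : ∀ k : Fin m, Essential g k → ∃ t, Essential f t ∧ σ t = k :=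
      fun k hk => essential_lift hσ hk
    set φ : Fin m → Fin n := fun k =>
      if h : Essential g k then (hmain k h).choose else (hmain k₀ hk₀').choose with hφ
    have hφ1 : ∀ k, Essential g k → Essential f (φ k) ∧ σ (φ k) = k := by
      intro k hk
      rw [hφ]
      simp only [dif_pos hk]
      exact (hmain k hk).choose_spec
    unfold essArity
    apply Finset.card_le_card_of_injOn φ
    · intro k hk
      rw [Finset.mem_coe, Finset.mem_filter] at hk ⊢
      exact ⟨Finset.mem_univ _, (hφ1 k hk.2).1⟩
    · intro k₁ hk₁ k₂ hk₂ heq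
      rw [Finset.coe_filter] at hk₁ hk₂
      have e1 := (hφ1 k₁ hk₁.2).2
      have e2 := (hφ1 k₂ hk₂.2).2
      rw [← e1, ← e2, heq]

lemma essS_le_of_minorS {A B : BF} (h : MinorS A B) : essS A ≤ essS B :=
  essArity_le_of_minor h

lemma essS_eq_of_equivS {A B : BF} (h : EquivS A B) : essS A = essS B :=
  le_antisymm (essS_le_of_minorS h.1) (essS_le_of_minorS h.2)

/-- the substitution map of an identification -/
def ids (i j : Fin n) : Fin n → Fin n := fun t => if t = i then j else t

lemma identify_apply (f : BFn n) (i j : Fin n) (a : Fin n → ZMod 2) :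
    identify f i j a = f (fun t => a (ids i j t)) := by
  unfold identify ids
  congr 1
  funext t
  by_cases h : t = i <;> simp [h]

lemma minor_identify (f : BFn n) (i j : Fin n) : Minor (identify f i j) f :=
  ⟨ids i j, fun a => identify_apply f i j a⟩

/-- core of strictness: a self-substitution cannot merge two essential variables -/
lemma no_essential_merge {f : BFn n} {τ : Fin n → Fin n}
    (hτ : ∀ x, f x = f (fun t => x (τ t))) {p q : Fin n}
    (hp : Essential f p) (hq : Essential f q) (hpq : p ≠ q) (heq : τ p = τ q) :
    False := by
  classical
  have hmain : ∀ k : Fin n, Essential f k → ∃ t, Essential f t ∧ τ t = k := by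
    intro k hk
    exact essential_lift (g := f) (σ := τ) (fun a => hτ a) hk
  set s := Finset.univ.filter fun t => Essential f t with hs
  have hp' : p ∈ s := by rw [hs, Finset.mem_filter]; exact ⟨Finset.mem_univ _, hp⟩
  have hq' : q ∈ s := by rw [hs, Finset.mem_filter]; exact ⟨Finset.mem_univ _, hq⟩
  set φ : Fin n → Fin n := fun k =>
    if h : Essential f k then (hmain k h).choose else k with hφ
  have hφ1 : ∀ k ∈ s, Essential f (φ k) ∧ τ (φ k) = k := by
    intro k hk
    rw [hs, Finset.mem_filter] at hk
    rw [hφ]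
    simp only [dif_pos hk.2]
    exact (hmain k hk.2).choose_spec
  have hmem : ∀ k ∈ s, φ k ∈ s := by
    intro k hk
    rw [hs, Finset.mem_filter]
    exact ⟨Finset.mem_univ _, (hφ1 k hk).1⟩
  have hinj : Set.InjOn φ s := by
    intro k₁ hk₁ k₂ hk₂ heq'
    have e1 := (hφ1 k₁ hk₁).2
    have e2 := (hφ1 k₂ hk₂).2
    rw [← e1, ← e2, heq']
  have himage : Finset.image φ s = s := by
    apply Finset.eq_of_subset_of_card_le
    · intro t ht
      rw [Finset.mem_image] at ht
      obtain ⟨k, hk, rfl⟩ := ht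
      exact hmem k hk
    · rw [Finset.card_image_of_injOn hinj]
  have hpim : p ∈ Finset.image φ s := by rw [himage]; exact hp'
  have hqim : q ∈ Finset.image φ s := by rw [himage]; exact hq'
  rw [Finset.mem_image] at hpim hqim
  obtain ⟨k₁, hk₁, hk₁e⟩ := hpim
  obtain ⟨k₂, hk₂, hk₂e⟩ := hqim
  have e1 : τ p = k₁ := by rw [← hk₁e]; exact (hφ1 k₁ hk₁).2
  have e2 : τ q = k₂ := by rw [← hk₂e]; exact (hφ1 k₂ hk₂).2
  apply hpq
  rw [← hk₁e, ← hk₂e]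
  rw [← e1, ← e2, heq]

lemma not_minor_identify {f : BFn n} {p q : Fin n}
    (hp : Essential f p) (hq : Essential f q) (hpq : p ≠ q) :
    ¬ Minor f (identify f p q) := by
  rintro ⟨σ', hσ'⟩
  set τ : Fin n → Fin n := fun t => σ' (ids p q t) with hτdef
  have hτ : ∀ x, f x = f (fun t => x (τ t)) := by
    intro x
    rw [hσ' x, identify_apply]
  have heq : τ p = τ q := by
    have h1 : ids p q p = q := by simp [ids]
    have h2 : ids p q q = q := by simp [ids, Ne.symm hpq]
    show σ' (ids p q p) = σ' (ids p q q)
    rw [h1, h2]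
  exact no_essential_merge hτ hp hq hpq heq

lemma identify_inessential_self {f : BFn n} {i j : Fin n} (hij : i ≠ j) :
    ¬ Essential (identify f i j) i := by
  rintro ⟨a, b, hab, hne⟩
  apply hne
  unfold identify
  congr 1
  funext t
  by_cases ht : t = i
  · subst ht
    simp only [if_pos rfl]
    exact hab j (Ne.symm hij)
  · simp only [if_neg ht]
    exact hab t ht

lemma essential_identify_subset {f : BFn n} {i j : Fin n} (hj : Essential f j)
    {s : Fin n} (hs : Essential (identify f i j) s) : Essential f s := by
  have hmin : ∀ a, identify f i j a = f (fun t => a (ids i j t)) := identify_apply f i j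
  obtain ⟨t, ht, hts⟩ := essential_lift hmin hs
  by_cases hti : t = i
  · subst hti
    have : ids t j t = j := by simp [ids]
    rw [this] at hts
    rwa [← hts]
  · have : ids i j t = t := by simp [ids, hti]
    rw [this] at hts
    rwa [← hts]

/-- B-type flip invariance from a dead variable of an identification -/
lemma flip_B {f : BFn n} {p v u : Fin n} (hpv : p ≠ v) (hup : u ≠ p) (huv : u ≠ v)
    (h : ¬ Essential (identify f p v) u) :
    ∀ x, x p = x v → f (flp x u) = f x := by
  intro x hx
  have hinv : ∀ a b : Fin n → ZMod 2, (∀ t, t ≠ u → a t = b t) →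
      identify f p v a = identify f p v b := by
    intro a b hab
    by_contra hne
    exact h ⟨a, b, hab, hne⟩
  have h1 : identify f p v x = f x := by
    unfold identify
    congr 1
    funext t
    by_cases ht : t = p
    · subst ht; simp only [if_pos rfl]; exact hx.symm
    · simp only [if_neg ht]
  have h2 : identify f p v (flp x u) = f (flp x u) := by
    unfold identify
    congr 1
    funext t
    by_cases ht : t = p
    · subst ht
      simp only [if_pos rfl]
      rw [flp_ne x (Ne.symm huv), flp_ne x (Ne.symm hup)]
      exact hx.symm
    · simp only [if_neg ht]
  have h3 : identify f p v (flp x u) = identify f p v x := by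
    apply hinv
    intro t ht
    exact flp_ne x ht
  rw [← h2, h3, h1]

/-- A-type double flip invariance from a dead identified variable -/
lemma flip_A {f : BFn n} {p v : Fin n} (hpv : p ≠ v)
    (h : ¬ Essential (identify f p v) v) :
    ∀ x, x p = x v → f (flp (flp x p) v) = f x := by
  intro x hx
  have hinv : ∀ a b : Fin n → ZMod 2, (∀ t, t ≠ v → a t = b t) →
      identify f p v a = identify f p v b := by
    intro a b hab
    by_contra hne
    exact h ⟨a, b, hab, hne⟩
  have h1 : identify f p v x = f x := by
    unfold identify
    congr 1
    funext t
    by_cases ht : t = p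
    · subst ht; simp only [if_pos rfl]; exact hx.symm
    · simp only [if_neg ht]
  have h2 : identify f p v (flp x v) = f (flp (flp x v) p) := by
    unfold identify
    congr 1
    funext t
    by_cases ht : t = p
    · rw [if_pos ht, ht, flp_self, flp_self, flp_ne x hpv, hx]
    · rw [if_neg ht, flp_ne (flp x v) ht]
  have h3 : identify f p v (flp x v) = identify f p v x := by
    apply hinv
    intro t ht
    exact flp_ne x ht
  have h4 : f (flp (flp x v) p) = f x := by rw [← h2, h3, h1]
  rw [flp_comm x hpv]
  exact h4

end Stmt10Aux




namespace Stmt10Aux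

variable {n : ℕ}

lemma max_of_lower_cover {F G : BF} (hlc : LowerCover G F) {u : BFn F.1}
    (h1 : MinorS G ⟨F.1, u⟩) (h2 : StrictMinorS ⟨F.1, u⟩ F) : MinorS ⟨F.1, u⟩ G := by
  by_contra hnot
  exact hlc.2 ⟨⟨F.1, u⟩, ⟨h1, hnot⟩, h2⟩

lemma lower_cover_identify {F G : BF} (hF2 : 2 ≤ essS F) (hlc : LowerCover G F) :
    ∃ k l : Fin F.1, k ≠ l ∧ Essential F.2 k ∧ Essential F.2 l ∧
      EquivS ⟨F.1, identify F.2 k l⟩ G := by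
  classical
  have hmin := hlc.1.1
  have hnmin := hlc.1.2
  obtain ⟨σ, hσ⟩ := hmin
  have hne : (Finset.univ.filter fun t => Essential F.2 t).Nonempty := by
    rw [← Finset.card_pos]
    have : 2 ≤ (Finset.univ.filter fun t => Essential F.2 t).card := hF2
    omega
  obtain ⟨e₀, he₀⟩ := hne
  have he₀' : Essential F.2 e₀ := (Finset.mem_filter.mp he₀).2
  by_cases hinj : ∀ t₁ t₂, Essential F.2 t₁ → Essential F.2 t₂ → σ t₁ = σ t₂ → t₁ = t₂
  · exfalso
    apply hnmin
    set ρ : Fin G.1 → Fin F.1 := fun y =>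
      if h : ∃ t, Essential F.2 t ∧ σ t = y then h.choose else e₀ with hρdef
    have hρ : ∀ t, Essential F.2 t → ρ (σ t) = t := by
      intro t ht
      have hex : ∃ t', Essential F.2 t' ∧ σ t' = σ t := ⟨t, ht, rfl⟩
      rw [hρdef]
      simp only [dif_pos hex]
      exact hinj _ _ hex.choose_spec.1 ht hex.choose_spec.2
    refine ⟨ρ, fun x => ?_⟩
    rw [hσ (fun i => x (ρ i))]
    apply eq_on_essential
    intro t ht
    rw [hρ t ht]
  · push_neg at hinj
    obtain ⟨k, l, hk, hl, hσkl, hkl⟩ := hinj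
    refine ⟨k, l, hkl, hk, hl, ?_, ?_⟩
    · -- MinorS ⟨identify⟩ G : use maximality
      apply max_of_lower_cover hlc
      · -- MinorS G ⟨identify⟩
        refine ⟨σ, fun a => ?_⟩
        show G.2 a = identify F.2 k l (fun i => a (σ i))
        rw [hσ a, identify_apply]
        apply congrArg
        funext t
        unfold ids
        by_cases ht : t = k
        · rw [if_pos ht, ht, hσkl]
        · rw [if_neg ht]
      · exact ⟨minor_identify F.2 k l, not_minor_identify hk hl hkl⟩
    · -- MinorS G ⟨identify⟩ (again, for the pair)
      refine ⟨σ, fun a => ?_⟩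
      show G.2 a = identify F.2 k l (fun i => a (σ i))
      rw [hσ a, identify_apply]
      apply congrArg
      funext t
      unfold ids
      by_cases ht : t = k
      · rw [if_pos ht, ht, hσkl]
      · rw [if_neg ht]

end Stmt10Aux


namespace Stmt10Aux

variable {n : ℕ}

lemma crit {f : BFn n} {G : BF}
    (hmaxi : ∀ u : BFn n, MinorS G ⟨n, u⟩ → StrictMinorS ⟨n, u⟩ ⟨n, f⟩ → MinorS ⟨n, u⟩ G)
    {a b : Fin n} (hEab : EquivS ⟨n, identify f a b⟩ G)
    {p q : Fin n} (hpq : p ≠ q) (hp : Essential f p) (hq : Essential f q)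
    (hcond : ¬ Essential (identify f a b) (ids a b p) ∨
             ¬ Essential (identify f a b) (ids a b q) ∨ ids a b p = ids a b q) :
    EquivS ⟨n, identify f p q⟩ G := by
  classical
  obtain ⟨β, hβess, hβ⟩ : ∃ β : Fin n → Fin n,
      (∀ s, Essential (identify f a b) s → β s = s) ∧ β (ids a b p) = β (ids a b q) := by
    by_cases hpq' : ids a b p = ids a b q
    · exact ⟨id, fun s _ => rfl, by rw [hpq']⟩
    · rcases hcond with hc | hc | hc
      · refine ⟨fun t => if t = ids a b p then ids a b q else t, ?_, ?_⟩
        · intro s hs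
          have hns : s ≠ ids a b p := by rintro rfl; exact hc hs
          show (if s = ids a b p then ids a b q else s) = s
          rw [if_neg hns]
        · show (if ids a b p = ids a b p then ids a b q else ids a b p)
              = if ids a b q = ids a b p then ids a b q else ids a b q
          rw [if_pos rfl, if_neg (Ne.symm hpq')]
      · refine ⟨fun t => if t = ids a b q then ids a b p else t, ?_, ?_⟩
        · intro s hs
          have hns : s ≠ ids a b q := by rintro rfl; exact hc hs
          show (if s = ids a b q then ids a b p else s) = s
          rw [if_neg hns]
        · show (if ids a b p = ids a b q then ids a b p else ids a b p)
              = if ids a b q = ids a b q then ids a b p else ids a b q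
          rw [if_pos rfl, if_neg hpq']
      · exact absurd hc hpq'
  set τ : Fin n → Fin n := fun t => β (ids a b t) with hτ
  have hτpq : τ p = τ q := hβ
  have key1 : ∀ x : Fin n → ZMod 2, identify f a b x = identify f p q (fun i => x (τ i)) := by
    intro x
    have e1 : identify f p q (fun i => x (τ i)) = f (fun t => x (τ (ids p q t))) :=
      identify_apply f p q _
    have e2 : (fun t => x (τ (ids p q t))) = fun t => x (τ t) := by
      funext t
      unfold ids
      by_cases ht : t = p
      · rw [if_pos ht, ht, hτpq]
      · rw [if_neg ht]
    have e4 : identify f a b (fun i => x (β i)) = f (fun t => x (β (ids a b t))) :=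
      identify_apply f a b _
    have e5 : identify f a b (fun i => x (β i)) = identify f a b x := by
      apply eq_on_essential
      intro s hs
      show x (β s) = x s
      rw [hβess s hs]
    rw [e1, e2, ← e5, e4]
  have hminor : Minor (identify f a b) (identify f p q) := ⟨τ, key1⟩
  have h1 : MinorS G ⟨n, identify f p q⟩ := minorS_trans hEab.2 hminor
  have h2 : StrictMinorS ⟨n, identify f p q⟩ ⟨n, f⟩ :=
    ⟨minor_identify f p q, not_minor_identify hp hq hpq⟩
  exact ⟨hmaxi _ h1 h2, h1⟩

end Stmt10Aux


/-- a lower cover losing more than one essential variable is the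
unique lower cover up to equivalence. -/
theorem stmt10 (F G : BF) (h : LowerCover G F) (hlt : essS G + 1 < essS F) :
    ∀ G' : BF, LowerCover G' F → EquivS G' G := by
  classical
  intro G' hG'
  by_contra hne
  obtain ⟨n, f⟩ := F
  have hF2 : 2 ≤ essS (⟨n, f⟩ : BF) := by omega
  obtain ⟨k, l, hkl, hk, hl, hEkl⟩ := Stmt10Aux.lower_cover_identify hF2 h
  obtain ⟨i, j, hij, hi, hj, hEij⟩ := Stmt10Aux.lower_cover_identify hF2 hG'
  have hmaxi : ∀ u : BFn n, MinorS G ⟨n, u⟩ → StrictMinorS ⟨n, u⟩ ⟨n, f⟩ →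
      MinorS ⟨n, u⟩ G := fun u h1 h2 => Stmt10Aux.max_of_lower_cover h h1 h2
  set gp : Fin n → Fin n → Prop := fun a b =>
    a ≠ b ∧ Essential f a ∧ Essential f b ∧ EquivS ⟨n, identify f a b⟩ G with hgp
  have hgpkl : gp k l := ⟨hkl, hk, hl, hEkl⟩
  have hgp_not_ij : ¬ gp i j := by
    rintro ⟨-, -, -, hEq⟩
    exact hne (Stmt10Aux.equivS_trans (Stmt10Aux.equivS_symm hEij) hEq)
  have hcrit : ∀ a b, gp a b → ∀ p q, p ≠ q → Essential f p → Essential f q →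
      (¬ Essential (identify f a b) (Stmt10Aux.ids a b p) ∨
       ¬ Essential (identify f a b) (Stmt10Aux.ids a b q) ∨
       Stmt10Aux.ids a b p = Stmt10Aux.ids a b q) → gp p q := by
    rintro a b ⟨hab, ha, hb, hEab⟩ p q hpq hp hq hcond
    exact ⟨hpq, hp, hq, Stmt10Aux.crit hmaxi hEab hpq hp hq hcond⟩
  set ESS := Finset.univ.filter (fun t => Essential f t) with hESS
  have hESScard : ESS.card = essS (⟨n, f⟩ : BF) := rfl
  have hdead : ∀ a b, gp a b →
      2 ≤ (ESS \ Finset.univ.filter (fun t => Essential (identify f a b) t)).card ∧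
      a ∈ ESS \ Finset.univ.filter (fun t => Essential (identify f a b) t) := by
    rintro a b ⟨hab, ha, hb, hEq⟩
    have hsub : Finset.univ.filter (fun t => Essential (identify f a b) t) ⊆ ESS := by
      intro t ht
      rw [Finset.mem_filter] at ht
      rw [hESS, Finset.mem_filter]
      exact ⟨Finset.mem_univ _, Stmt10Aux.essential_identify_subset hb ht.2⟩
    constructor
    · rw [Finset.card_sdiff_of_subset hsub]
      have h1 : (Finset.univ.filter (fun t => Essential (identify f a b) t)).card
          = essS G := Stmt10Aux.essS_eq_of_equivS hEq
      omega
    · rw [Finset.mem_sdiff]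
      constructor
      · rw [hESS, Finset.mem_filter]; exact ⟨Finset.mem_univ _, ha⟩
      · rw [Finset.mem_filter]
        push_neg
        intro _
        exact Stmt10Aux.identify_inessential_self hab
  set Zset := Finset.univ.filter (fun v => Essential f v ∧
      ∃ a b, gp a b ∧ ¬ Essential (identify f a b) (Stmt10Aux.ids a b v)) with hZset
  have hZuniv : ∀ v ∈ Zset, ∀ p, Essential f p → p ≠ v → gp p v ∧ gp v p := by
    intro v hv p hp hpv
    rw [hZset, Finset.mem_filter] at hv
    obtain ⟨-, hvE, a, b, hgab, hdeadv⟩ := hv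
    constructor
    · exact hcrit a b hgab p v hpv hp hvE (Or.inr (Or.inl hdeadv))
    · exact hcrit a b hgab v p (Ne.symm hpv) hvE hp (Or.inl hdeadv)
  have hessZ : ∀ v ∈ Zset, Essential f v := by
    intro v hv
    rw [hZset, Finset.mem_filter] at hv
    exact hv.2.1
  have hiZ : i ∉ Zset := by
    intro hiz
    exact hgp_not_ij (hZuniv i hiz j hj (Ne.symm hij)).2
  have hjZ : j ∉ Zset := by
    intro hjz
    exact hgp_not_ij (hZuniv j hjz i hi hij).1
  -- membership tool for Zset
  have hZmem : ∀ v, Essential f v → ∀ a b, gp a b →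
      ¬ Essential (identify f a b) (Stmt10Aux.ids a b v) → v ∈ Zset := by
    intro v hvE a b hgab hd
    rw [hZset, Finset.mem_filter]
    exact ⟨Finset.mem_univ _, hvE, a, b, hgab, hd⟩
  -- existence of z
  obtain ⟨hc2, hkd⟩ := hdead k l hgpkl
  have hc2' : 1 < (ESS \ Finset.univ.filter
      (fun t => Essential (identify f k l) t)).card := by omega
  obtain ⟨z, hz, hzk⟩ := Finset.exists_mem_ne hc2' k
  have hzZ : z ∈ Zset := by
    rw [Finset.mem_sdiff] at hz
    have hzE : Essential f z := by
      have := hz.1; rw [hESS, Finset.mem_filter] at this; exact this.2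
    apply hZmem z hzE k l hgpkl
    have hzd : ¬ Essential (identify f k l) z := by
      have := hz.2; rw [Finset.mem_filter] at this; push_neg at this
      exact this (Finset.mem_univ _)
    have : Stmt10Aux.ids k l z = z := by simp [Stmt10Aux.ids, hzk]
    rwa [this]
  -- C1
  have hC1 : ∀ v ∈ Zset, ∃ u ∈ Zset, u ≠ v ∧
      ∀ x : Fin n → ZMod 2, x i = x v → f (Stmt10Aux.flp x u) = f x := by
    intro v hvZ
    have hvE := hessZ v hvZ
    have hiv : i ≠ v := by rintro rfl; exact hiZ hvZ
    have hgiv : gp i v := (hZuniv v hvZ i hi hiv).1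
    obtain ⟨hc2', hid⟩ := hdead i v hgiv
    have hc2'' : 1 < (ESS \ Finset.univ.filter
        (fun t => Essential (identify f i v) t)).card := by omega
    obtain ⟨u, hu, hui⟩ := Finset.exists_mem_ne hc2'' i
    rw [Finset.mem_sdiff] at hu
    have huE : Essential f u := by
      have := hu.1; rw [hESS, Finset.mem_filter] at this; exact this.2
    have hud : ¬ Essential (identify f i v) u := by
      have := hu.2; rw [Finset.mem_filter] at this; push_neg at this
      exact this (Finset.mem_univ _)
    have hidsu : Stmt10Aux.ids i v u = u := by simp [Stmt10Aux.ids, hui]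
    have huv : u ≠ v := by
      rintro rfl
      -- then v dead in identify f i v, so i ∈ Zset, contradiction
      apply hiZ
      apply hZmem i hi i u hgiv
      have hidsi : Stmt10Aux.ids i u i = u := by simp [Stmt10Aux.ids]
      rwa [hidsi]
    refine ⟨u, hZmem u huE i v hgiv (by rwa [hidsu]), huv, ?_⟩
    exact Stmt10Aux.flip_B hiv hui huv hud
  -- C2
  have hC2 : ∀ v' ∈ Zset, ∀ v ∈ Zset, v' ≠ v →
      (∀ x : Fin n → ZMod 2, x v' = x v →
        f (Stmt10Aux.flp (Stmt10Aux.flp x v') v) = f x) ∨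
      (∃ u ∈ Zset, u ≠ v' ∧ u ≠ v ∧
        ∀ x : Fin n → ZMod 2, x v' = x v → f (Stmt10Aux.flp x u) = f x) := by
    intro v' hv'Z v hvZ hne'
    have hv'E := hessZ v' hv'Z
    have hvE := hessZ v hvZ
    have hgvv : gp v' v := (hZuniv v hvZ v' hv'E hne').1
    obtain ⟨hc2', hvd'⟩ := hdead v' v hgvv
    have hc2'' : 1 < (ESS \ Finset.univ.filter
        (fun t => Essential (identify f v' v) t)).card := by omega
    obtain ⟨u, hu, huv'⟩ := Finset.exists_mem_ne hc2'' v'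
    rw [Finset.mem_sdiff] at hu
    have huE : Essential f u := by
      have := hu.1; rw [hESS, Finset.mem_filter] at this; exact this.2
    have hud : ¬ Essential (identify f v' v) u := by
      have := hu.2; rw [Finset.mem_filter] at this; push_neg at this
      exact this (Finset.mem_univ _)
    by_cases huv : u = v
    · left
      apply Stmt10Aux.flip_A hne'
      rw [huv] at hud
      exact hud
    · right
      have hidsu : Stmt10Aux.ids v' v u = u := by simp [Stmt10Aux.ids, huv']
      refine ⟨u, hZmem u huE v' v hgvv (by rwa [hidsu]), huv', huv, ?_⟩
      exact Stmt10Aux.flip_B hne' huv' huv hud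
  -- cardinality
  obtain ⟨u₀, hu₀Z, hu₀z, -⟩ := hC1 z hzZ
  have hcard2 : 2 ≤ Zset.card := Finset.one_lt_card.mpr ⟨u₀, hu₀Z, z, hzZ, hu₀z⟩
  exact Stmt10Aux.propQ f i Zset.card Zset rfl hcard2 hiZ hessZ hC1 hC2
end

section
/- Let H = (V, E) be a hypergraph with |V| ≥ 2 and ∪E = V. If the automorphism group of H is 2-set transitive, then the Boolean function f_H is join-irreducible. -/
open Classical

lemma minor_trans {l m n : ℕ} {g : BFn l} {h : BFn m} {f : BFn n}
    (h1 : Minor g h) (h2 : Minor h f) : Minor g f := by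
  obtain ⟨σ, hσ⟩ := h1
  obtain ⟨τ, hτ⟩ := h2
  exact ⟨fun i => σ (τ i), fun a => by rw [hσ, hτ]⟩

lemma exists_essential_of_ne {n : ℕ} (f : BFn n) (T : Finset (Fin n)) :
    ∀ c d : Fin n → ZMod 2, (∀ t, t ∉ T → c t = d t) → f c ≠ f d →
      ∃ i ∈ T, Essential f i := by
  induction T using Finset.induction_on with
  | empty =>
    intro c d h hne
    exact absurd (congrArg f (funext fun t => h t (by simp))) hne
  | @insert i T hiT ih =>
    intro c d hcd hne
    by_cases h : f c = f (Function.update c i (d i))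
    · have hne' : f (Function.update c i (d i)) ≠ f d := h ▸ hne
      obtain ⟨i', hi', he⟩ := ih (Function.update c i (d i)) d (by
        intro t ht
        by_cases hti : t = i
        · subst hti; simp
        · rw [Function.update_of_ne hti]
          exact hcd t (by simp [hti, ht])) hne'
      exact ⟨i', Finset.mem_insert_of_mem hi', he⟩
    · refine ⟨i, Finset.mem_insert_self _ _, c, Function.update c i (d i), ?_, h⟩
      intro j hj
      rw [Function.update_of_ne hj]

lemma essArity_le_of_minor {m n : ℕ} {g : BFn m} {f : BFn n}
    (h : Minor g f) : essArity g ≤ essArity f := by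
  obtain ⟨σ, hσ⟩ := h
  rcases Nat.eq_zero_or_pos n with h0 | hpos
  · subst h0
    have : ∀ j, ¬ Essential g j := by
      rintro j ⟨a, b, hab, hne⟩
      exact hne (by rw [hσ, hσ]; exact congrArg f (funext fun t => t.elim0))
    unfold essArity
    rw [Finset.filter_false_of_mem fun j _ => this j]
    simp
  · have : Nonempty (Fin n) := Fin.pos_iff_nonempty.mp hpos
    have key : ∀ j : Fin m, Essential g j → ∃ i : Fin n, σ i = j ∧ Essential f i := by
      rintro j ⟨a, b, hab, hne⟩
      have hne' : f (fun i => a (σ i)) ≠ f (fun i => b (σ i)) := by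
        rw [← hσ, ← hσ]; exact hne
      obtain ⟨i, hiT, hess⟩ := exists_essential_of_ne f
        (Finset.univ.filter fun i => σ i = j) _ _
        (fun t ht => hab _ (by simpa using ht)) hne'
      exact ⟨i, (Finset.mem_filter.mp hiT).2, hess⟩
    have key' : ∀ j : Fin m, ∃ i : Fin n, Essential g j → (σ i = j ∧ Essential f i) := by
      intro j
      by_cases h : Essential g j
      · exact (key j h).imp fun i hi _ => hi
      · exact ⟨Classical.arbitrary _, fun h' => absurd h' h⟩
    choose ι hι using key'
    apply Finset.card_le_card_of_injOn ι
    · intro j hj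
      simp only [Finset.mem_coe, Finset.mem_filter, Finset.mem_univ, true_and] at hj ⊢
      exact (hι j hj).2
    · intro j1 h1 j2 h2 heq
      simp only [Finset.coe_filter, Set.mem_setOf_eq, Finset.mem_univ, true_and] at h1 h2
      rw [← (hι j1 h1).1, ← (hι j2 h2).1, heq]

lemma fHG_essential {n : ℕ} (𝓔 : HG n) (hcov : ∀ v : Fin n, ∃ E ∈ 𝓔, v ∈ E)
    (v : Fin n) : Essential (fHG 𝓔) v := by
  obtain ⟨E1, hE1, hvE1⟩ := hcov v
  obtain ⟨E0, hE0, hmin⟩ := Finset.exists_min_image (𝓔.filter fun S => v ∈ S)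
    Finset.card ⟨E1, Finset.mem_filter.mpr ⟨hE1, hvE1⟩⟩
  rw [Finset.mem_filter] at hE0
  set a : Fin n → ZMod 2 := fun t => if t ∈ E0.erase v then 1 else 0 with ha
  set b : Fin n → ZMod 2 := fun t => if t ∈ E0 then 1 else 0 with hb
  have prodeq : ∀ (U : Finset (Fin n)) (S : Finset (Fin n)),
      (∏ t ∈ S, if t ∈ U then (1 : ZMod 2) else 0) = if S ⊆ U then 1 else 0 := by
    intro U S
    split
    · next h => exact Finset.prod_eq_one fun t ht => if_pos (h ht)
    · next h =>
      obtain ⟨t, htS, htU⟩ := Finset.not_subset.mp h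
      exact Finset.prod_eq_zero htS (if_neg htU)
  have fa : fHG 𝓔 a = ((𝓔.filter fun S => S ⊆ E0.erase v).card : ZMod 2) := by
    unfold fHG
    rw [show (∑ S ∈ 𝓔, ∏ i ∈ S, a i) = ∑ S ∈ 𝓔, if S ⊆ E0.erase v then (1:ZMod 2) else 0
      from Finset.sum_congr rfl fun S _ => prodeq _ S]
    rw [Finset.sum_boole]
  have fb : fHG 𝓔 b = ((𝓔.filter fun S => S ⊆ E0).card : ZMod 2) := by
    unfold fHG
    rw [show (∑ S ∈ 𝓔, ∏ i ∈ S, b i) = ∑ S ∈ 𝓔, if S ⊆ E0 then (1:ZMod 2) else 0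
      from Finset.sum_congr rfl fun S _ => prodeq _ S]
    rw [Finset.sum_boole]
  have hsplit : 𝓔.filter (fun S => S ⊆ E0) =
      insert E0 (𝓔.filter fun S => S ⊆ E0.erase v) := by
    ext S
    simp only [Finset.mem_filter, Finset.mem_insert]
    constructor
    · rintro ⟨hS, hsub⟩
      by_cases hvS : v ∈ S
      · left
        exact Finset.eq_of_subset_of_card_le hsub
          (hmin S (Finset.mem_filter.mpr ⟨hS, hvS⟩))
      · right
        exact ⟨hS, Finset.subset_erase.mpr ⟨hsub, hvS⟩⟩
    · rintro (rfl | ⟨hS, hsub⟩)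
      · exact ⟨hE0.1, le_refl _⟩
      · exact ⟨hS, hsub.trans (Finset.erase_subset _ _)⟩
  have hE0notin : E0 ∉ 𝓔.filter fun S => S ⊆ E0.erase v := by
    simp only [Finset.mem_filter, not_and]
    intro _
    intro hsub
    exact absurd (hsub hE0.2) (Finset.notMem_erase v E0)
  have hcard : (𝓔.filter fun S => S ⊆ E0).card =
      (𝓔.filter fun S => S ⊆ E0.erase v).card + 1 := by
    rw [hsplit, Finset.card_insert_of_notMem hE0notin]
  refine ⟨a, b, ?_, ?_⟩
  · intro j hj
    simp [ha, hb, Finset.mem_erase, hj]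
  · rw [fa, fb, hcard]
    push_cast
    intro h
    rw [left_eq_add] at h
    exact one_ne_zero h

lemma image_irrel {α β : Type*} (inst1 inst2 : DecidableEq β) (f : α → β)
    (S : Finset α) : @Finset.image α β inst1 f S = @Finset.image α β inst2 f S := by
  ext x; simp [Finset.mem_image]

lemma fHG_invariant {n : ℕ} (𝓔 : HG n) (φ : Fin n ≃ Fin n)
    (hiso : IsHGIso 𝓔 𝓔 φ) (a : Fin n → ZMod 2) :
    fHG 𝓔 (fun t => a (φ t)) = fHG 𝓔 a := by
  have hiso' : ∀ S : Finset (Fin n), S ∈ 𝓔 ↔ S.image φ ∈ 𝓔 := by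
    intro S
    have h := hiso S
    rwa [image_irrel _ (instDecidableEqFin n)] at h
  unfold fHG
  refine Finset.sum_nbij' (fun S => S.image φ) (fun S => S.image φ.symm)
    ?_ ?_ ?_ ?_ ?_
  · intro S hS
    exact (hiso' S).mp hS
  · intro S hS
    have h2 : (S.image φ.symm).image φ = S := by
      rw [Finset.image_image]; simp
    exact (hiso' (S.image φ.symm)).mpr (by rwa [h2])
  · intro S _; simp [Finset.image_image]
  · intro S _; simp [Finset.image_image]
  · intro S _; simp only []; exact (Finset.prod_image fun x _ y _ h => φ.injective h).symm

lemma identify_minor_of_iso {n : ℕ} (𝓔 : HG n) {i j i0 j0 : Fin n}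
    (hij : i ≠ j) (hi0j0 : i0 ≠ j0) (φ : Fin n ≃ Fin n)
    (hiso : IsHGIso 𝓔 𝓔 φ) (himg : ({i0, j0} : Finset (Fin n)).image φ = {i, j}) :
    Minor (identify (fHG 𝓔) i j) (identify (fHG 𝓔) i0 j0) := by
  set f := fHG 𝓔 with hfdef
  refine ⟨fun t => if φ t = i then j else φ t, fun a => ?_⟩
  have hmem : ∀ t ∈ ({i0, j0} : Finset (Fin n)), φ t ∈ ({i, j} : Finset (Fin n)) := by
    intro t ht
    rw [← himg]
    exact Finset.mem_image_of_mem φ ht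
  have hφi0 : (if φ i0 = i then j else φ i0) = j := by
    have := hmem i0 (by simp)
    simp only [Finset.mem_insert, Finset.mem_singleton] at this
    rcases this with h | h <;> simp [h, hij.symm]
  have hφj0 : (if φ j0 = i then j else φ j0) = j := by
    have := hmem j0 (by simp)
    simp only [Finset.mem_insert, Finset.mem_singleton] at this
    rcases this with h | h <;> simp [h, hij.symm]
  have inv := fHG_invariant 𝓔 φ hiso (fun s => if s = i then a j else a s)
  rw [← hfdef] at inv
  show f (fun s => if s = i then a j else a s) =
    f (fun t => if t = i0 then a (if φ j0 = i then j else φ j0)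
        else a (if φ t = i then j else φ t))
  rw [← inv]
  congr 1
  funext t
  show (if φ t = i then a j else a (φ t)) =
    if t = i0 then a (if φ j0 = i then j else φ j0)
      else a (if φ t = i then j else φ t)
  rw [hφj0]
  by_cases ht : t = i0
  · subst ht
    rw [if_pos rfl, ← apply_ite a, hφi0]
  · rw [if_neg ht]
    exact (apply_ite a _ _ _).symm

/-- a hypergraph with at least two vertices, no isolated vertex,
and a 2-set transitive automorphism group yields a join-irreducible function. -/
theorem stmt14 {n : ℕ} (hn : 2 ≤ n) (𝓔 : HG n)
    (hcov : ∀ v : Fin n, ∃ E ∈ 𝓔, v ∈ E)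
    (htrans : ∀ e e' : Finset (Fin n), e.card = 2 → e'.card = 2 →
      ∃ φ : Fin n ≃ Fin n, IsHGIso 𝓔 𝓔 φ ∧ e.image φ = e') :
    JoinIrred ⟨n, fHG 𝓔⟩ := by
  classical
  have hn0 : 0 < n := by omega
  set f := fHG 𝓔 with hf
  obtain ⟨i0, j0, hij0⟩ : ∃ i0 j0 : Fin n, i0 ≠ j0 :=
    ⟨⟨0, by omega⟩, ⟨1, by omega⟩, by simp [Fin.ext_iff]⟩
  set f' := identify f i0 j0 with hf'
  have hminor0 : Minor f' f :=
    ⟨fun t => if t = i0 then j0 else t,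
      fun a => congrArg f (funext fun t => (apply_ite a _ _ _).symm)⟩
  have hessf : essArity f = n := by
    unfold essArity
    rw [Finset.filter_true_of_mem fun i _ => fHG_essential 𝓔 hcov i]
    simp
  have hessf' : essArity f' < n := by
    have hsub : (Finset.univ.filter fun i => Essential f' i) ⊆ Finset.univ.erase i0 := by
      intro x hx
      rw [Finset.mem_filter] at hx
      rw [Finset.mem_erase]
      refine ⟨?_, Finset.mem_univ x⟩
      intro heq
      obtain ⟨a, b, hab, hne⟩ := hx.2
      rw [heq] at hab
      apply hne
      show f (fun t => if t = i0 then a j0 else a t) =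
        f (fun t => if t = i0 then b j0 else b t)
      congr 1; funext t
      by_cases ht : t = i0
      · simp [ht, hab j0 hij0.symm]
      · simp [ht, hab t ht]
    calc essArity f' ≤ (Finset.univ.erase i0).card := Finset.card_le_card hsub
    _ = n - 1 := by simp
    _ < n := by omega
  have hident : ∀ i j : Fin n, i ≠ j → Minor (identify f i j) f' := by
    intro i j hij
    obtain ⟨φ, hiso, himg⟩ := htrans {i0, j0} {i, j}
      (Finset.card_pair hij0) (Finset.card_pair hij)
    exact identify_minor_of_iso 𝓔 hij hij0 φ hiso himg
  refine ⟨⟨n, f'⟩, ⟨hminor0, ?_⟩, ?_⟩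
  · intro h
    have hle : essArity f ≤ essArity f' := essArity_le_of_minor h
    rw [hessf] at hle
    omega
  · intro G hG
    obtain ⟨σ, hσ⟩ := hG.1
    by_cases hinj : Function.Injective σ
    · exfalso
      apply hG.2
      have : Nonempty (Fin n) := Fin.pos_iff_nonempty.mp hn0
      refine ⟨Function.invFun σ, fun a => ?_⟩
      rw [hσ]
      exact congrArg f
        (funext fun i => (congrArg a (Function.leftInverse_invFun hinj i)).symm)
    · simp only [Function.Injective, not_forall] at hinj
      obtain ⟨i, j, hσij, hij⟩ := hinj
      have h1 : Minor G.2 (identify f i j) := by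
        refine ⟨σ, fun a => ?_⟩
        rw [hσ]
        show f (fun t => a (σ t)) = f (fun t => if t = i then a (σ j) else a (σ t))
        congr 1; funext t
        by_cases ht : t = i
        · subst ht; rw [if_pos rfl, hσij]
        · rw [if_neg ht]
      exact minor_trans h1 (hident i j hij)
end
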